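/- arXiv:1701.02675 — 4 statements merged into one kernel-verified Lean document; each statement's English description precedes it below -/
import Mathlib

section
/- Let u₁ = χ_{B̄(0,1)} be the characteristic function of the closed unit disk, and assume B̄(0,1) ⊂ Ω. Then for every θ ∈ ℝ and a ∈ (0,1], DTV^{a,θ}(u₁) = ∫₀^{2π} ( cos²ω + a² sin²ω )^{1/2} dω; in particular the value is independent of θ. -/
open MeasureTheory Filter
open scoped ENNReal Topology Pointwise

noncomputable section

abbrev E2 := EuclideanSpace ℝ (Fin 2)

/-- Build a vector of `ℝ²` from its coordinates. -/
def vec2 (x y : ℝ) : E2 := (WithLp.equiv 2 (Fin 2 → ℝ)).symm ![x, y]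

/-- The elliptical set `E^{a,θ}`. -/
def Ellip (a θ : ℝ) : Set E2 :=
  {x : E2 | (x 0 * Real.cos θ + x 1 * Real.sin θ) ^ 2 +
      ((-(x 0) * Real.sin θ + x 1 * Real.cos θ) / a) ^ 2 ≤ 1}

/-- Partial derivative in the `i`-th coordinate direction. -/
def pd (i : Fin 2) (f : E2 → ℝ) (x : E2) : ℝ :=
  fderiv ℝ f x (EuclideanSpace.single i 1)

/-- Divergence of a vector field on `ℝ²`. -/
def divVec (v : E2 → E2) (x : E2) : ℝ :=
  pd 0 (fun y => v y 0) x + pd 1 (fun y => v y 1) x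

/-- `C¹` vector fields compactly supported in `Ω`. -/
def Cc1 (Ω : Set E2) (v : E2 → E2) : Prop :=
  ContDiff ℝ 1 v ∧ HasCompactSupport v ∧ tsupport v ⊆ Ω

/-- The directional total variation `DTV^{a,θ}`. -/
def DTV (Ω : Set E2) (a θ : ℝ) (u : E2 → ℝ) : ℝ≥0∞ :=
  ⨆ v ∈ {v : E2 → E2 | Cc1 Ω v ∧ ∀ x ∈ Ω, v x ∈ Ellip a θ},
    ENNReal.ofReal (∫ x in Ω, u x * divVec v x)

/-- The total variation. -/
def TV (Ω : Set E2) (u : E2 → ℝ) : ℝ≥0∞ :=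
  ⨆ v ∈ {v : E2 → E2 | Cc1 Ω v ∧ ∀ x ∈ Ω, ‖v x‖ ≤ 1},
    ENNReal.ofReal (∫ x in Ω, u x * divVec v x)

abbrev Mat2 := Matrix (Fin 2) (Fin 2) ℝ

/-- The rotation matrix `R_θ`. -/
def Rmat (θ : ℝ) : Mat2 := !![Real.cos θ, -Real.sin θ; Real.sin θ, Real.cos θ]

/-- The matrix `Λ_a = diag(1,a)`. -/
def Lmat (a : ℝ) : Mat2 := !![1, 0; 0, a]

/-- Symmetric `2×2` matrices whose rows and columns lie in `S ⊆ ℝ²`. -/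
def rowcol (S : Set E2) : Set Mat2 :=
  {V : Mat2 | V.IsSymm ∧ (∀ i : Fin 2, vec2 (V i 0) (V i 1) ∈ S) ∧
    ∀ j : Fin 2, vec2 (V 0 j) (V 1 j) ∈ S}

/-- `E^{a,θ}_{2×2}`. -/
def EllipM (a θ : ℝ) : Set Mat2 := rowcol (Ellip a θ)

/-- `B_{2×2}`. -/
def BallM : Set Mat2 := rowcol (Metric.closedBall 0 1)

/-- Divergence of a (symmetric) matrix field. -/
def divMat (W : E2 → Mat2) (x : E2) : E2 :=
  vec2 (pd 0 (fun y => W y 0 0) x + pd 1 (fun y => W y 0 1) x)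
    (pd 0 (fun y => W y 1 0) x + pd 1 (fun y => W y 1 1) x)

/-- Second-order divergence of a matrix field. -/
def div2Mat (W : E2 → Mat2) (x : E2) : ℝ :=
  pd 0 (pd 0 (fun y => W y 0 0)) x + pd 1 (pd 1 (fun y => W y 1 1)) x +
    2 * pd 0 (pd 1 (fun y => W y 0 1)) x

/-- `C²` symmetric-matrix fields compactly supported in `Ω`. -/
def Cc2Sym (Ω : Set E2) (W : E2 → Mat2) : Prop :=
  (∀ i j : Fin 2, ContDiff ℝ 2 (fun x => W x i j)) ∧ HasCompactSupport W ∧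
    tsupport W ⊆ Ω ∧ ∀ x, (W x).IsSymm

/-- The second-order directional total generalized variation `DTGV²_λ`. -/
def DTGV2 (Ω : Set E2) (a θ l0 l1 : ℝ) (u : E2 → ℝ) : ℝ≥0∞ :=
  ⨆ W ∈ {W : E2 → Mat2 | Cc2Sym Ω W ∧ (∀ x ∈ Ω, W x ∈ l0 • EllipM a θ) ∧
      ∀ x ∈ Ω, divMat W x ∈ l1 • Ellip a θ},
    ENNReal.ofReal (∫ x in Ω, u x * div2Mat W x)

/-- The second-order total generalized variation `TGV²_λ`. -/
def TGV2 (Ω : Set E2) (l0 l1 : ℝ) (u : E2 → ℝ) : ℝ≥0∞ :=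
  ⨆ W ∈ {W : E2 → Mat2 | Cc2Sym Ω W ∧ (∀ x ∈ Ω, W x ∈ l0 • BallM) ∧
      ∀ x ∈ Ω, divMat W x ∈ Metric.closedBall 0 l1},
    ENNReal.ofReal (∫ x in Ω, u x * div2Mat W x)

namespace DTVAux
open Real

def s0 : E2 := EuclideanSpace.single 0 1
def s1 : E2 := EuclideanSpace.single 1 1

lemma e2_ext {u w : E2} (h0 : u 0 = w 0) (h1 : u 1 = w 1) : u = w := by
  ext i; fin_cases i <;> assumption

lemma vec2_eq_smul (x y : ℝ) : vec2 x y = x • s0 + y • s1 := by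
  ext i
  fin_cases i <;>
    simp [vec2, s0, s1, EuclideanSpace.single_apply, PiLp.add_apply, PiLp.smul_apply]

lemma hasDerivAt_vec2 {f g : ℝ → ℝ} {f' g' t : ℝ} (hf : HasDerivAt f f' t)
    (hg : HasDerivAt g g' t) :
    HasDerivAt (fun t => vec2 (f t) (g t)) (vec2 f' g') t := by
  simp only [vec2_eq_smul]
  exact (hf.smul_const s0).add (hg.smul_const s1)

lemma e2_apply_deriv {F : ℝ → E2} {F' : E2} {t : ℝ} (h : HasDerivAt F F' t) (i : Fin 2) :
    HasDerivAt (fun s => F s i) (F' i) t := by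
  exact (EuclideanSpace.proj i).hasFDerivAt.comp_hasDerivAt t h

lemma fderiv_dir (v : E2 → E2) (x : E2) (c s : ℝ) :
    fderiv ℝ v x (vec2 c s) = c • fderiv ℝ v x s0 + s • fderiv ℝ v x s1 := by
  rw [vec2_eq_smul, map_add, _root_.map_smul, _root_.map_smul]

lemma pd_comp (v : E2 → E2) (hv : ContDiff ℝ 1 v) (i j : Fin 2) (x : E2) :
    pd i (fun y => v y j) x = fderiv ℝ v x (EuclideanSpace.single i 1) j := by
  have hd : HasFDerivAt v (fderiv ℝ v x) x := (hv.differentiable one_ne_zero x).hasFDerivAt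
  have h2 : HasFDerivAt (fun y => v y j) ((EuclideanSpace.proj j).comp (fderiv ℝ v x)) x := by
    exact ((EuclideanSpace.proj j).hasFDerivAt.comp x hd : )
  rw [pd, h2.fderiv]; rfl

lemma divVec_eq (v : E2 → E2) (hv : ContDiff ℝ 1 v) (x : E2) :
    divVec v x = fderiv ℝ v x s0 0 + fderiv ℝ v x s1 1 := by
  rw [divVec, pd_comp v hv, pd_comp v hv]; rfl

lemma continuous_divVec (v : E2 → E2) (hv : ContDiff ℝ 1 v) : Continuous (divVec v) := by
  have h := hv.continuous_fderiv one_ne_zero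
  have h0 : Continuous fun x => fderiv ℝ v x s0 0 :=
    (EuclideanSpace.proj (0:Fin 2)).continuous.comp (h.clm_apply continuous_const)
  have h1 : Continuous fun x => fderiv ℝ v x s1 1 :=
    (EuclideanSpace.proj (1:Fin 2)).continuous.comp (h.clm_apply continuous_const)
  have : divVec v = fun x => fderiv ℝ v x s0 0 + fderiv ℝ v x s1 1 :=
    funext (divVec_eq v hv)
  rw [this]; exact h0.add h1

end DTVAux


namespace DTVAux
open Real

def Pc (r ω : ℝ) : E2 := vec2 (r * cos ω) (r * sin ω)

def gf (v : E2 → E2) (r ω : ℝ) : ℝ :=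
  r * (v (Pc r ω) 0 * cos ω + v (Pc r ω) 1 * sin ω)

def hf (v : E2 → E2) (r ω : ℝ) : ℝ :=
  v (Pc r ω) 0 * (-sin ω) + v (Pc r ω) 1 * cos ω

def gder (v : E2 → E2) (r ω : ℝ) : ℝ :=
  (v (Pc r ω) 0 * cos ω + v (Pc r ω) 1 * sin ω)
  + r * ((fderiv ℝ v (Pc r ω) (vec2 (cos ω) (sin ω))) 0 * cos ω
       + (fderiv ℝ v (Pc r ω) (vec2 (cos ω) (sin ω))) 1 * sin ω)

def hder (v : E2 → E2) (r ω : ℝ) : ℝ :=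
  ((fderiv ℝ v (Pc r ω) (vec2 (r * -sin ω) (r * cos ω))) 0 * (-sin ω)
   + (fderiv ℝ v (Pc r ω) (vec2 (r * -sin ω) (r * cos ω))) 1 * cos ω)
  + (v (Pc r ω) 0 * (-cos ω) + v (Pc r ω) 1 * (-sin ω))

lemma hasDerivAt_gf (v : E2 → E2) (hv : ContDiff ℝ 1 v) (ω r : ℝ) :
    HasDerivAt (fun r => gf v r ω) (gder v r ω) r := by
  have hcurve : HasDerivAt (fun r : ℝ => Pc r ω) (vec2 (cos ω) (sin ω)) r := by
    simpa [Pc] using hasDerivAt_vec2 (hasDerivAt_mul_const (cos ω)) (hasDerivAt_mul_const (sin ω))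
  have hcomp : HasDerivAt (fun r => v (Pc r ω)) (fderiv ℝ v (Pc r ω) (vec2 (cos ω) (sin ω))) r :=
    ((hv.differentiable one_ne_zero _).hasFDerivAt).comp_hasDerivAt r hcurve
  have hin : HasDerivAt (fun r => v (Pc r ω) 0 * cos ω + v (Pc r ω) 1 * sin ω)
      ((fderiv ℝ v (Pc r ω) (vec2 (cos ω) (sin ω))) 0 * cos ω
        + (fderiv ℝ v (Pc r ω) (vec2 (cos ω) (sin ω))) 1 * sin ω) r :=
    ((e2_apply_deriv hcomp 0).mul_const (cos ω)).add ((e2_apply_deriv hcomp 1).mul_const (sin ω))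
  have := (hasDerivAt_id r).mul hin
  refine this.congr_deriv ?_
  simp only [gder, id_eq, one_mul]

lemma hasDerivAt_hf (v : E2 → E2) (hv : ContDiff ℝ 1 v) (r ω : ℝ) :
    HasDerivAt (fun ω => hf v r ω) (hder v r ω) ω := by
  have hc : HasDerivAt (fun ω : ℝ => r * cos ω) (r * -sin ω) ω :=
    (Real.hasDerivAt_cos ω).const_mul r
  have hs : HasDerivAt (fun ω : ℝ => r * sin ω) (r * cos ω) ω :=
    (Real.hasDerivAt_sin ω).const_mul r
  have hcurve : HasDerivAt (fun ω : ℝ => Pc r ω) (vec2 (r * -sin ω) (r * cos ω)) ω := by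
    simpa [Pc] using hasDerivAt_vec2 hc hs
  have hcomp : HasDerivAt (fun ω => v (Pc r ω))
      (fderiv ℝ v (Pc r ω) (vec2 (r * -sin ω) (r * cos ω))) ω :=
    ((hv.differentiable one_ne_zero _).hasFDerivAt).comp_hasDerivAt ω hcurve
  have h1 : HasDerivAt (fun ω : ℝ => -sin ω) (-cos ω) ω := (Real.hasDerivAt_sin ω).neg
  have := ((e2_apply_deriv hcomp 0).mul h1).add ((e2_apply_deriv hcomp 1).mul (Real.hasDerivAt_cos ω))
  refine this.congr_deriv ?_
  simp only [hder]
  ring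

lemma gder_add_hder (v : E2 → E2) (hv : ContDiff ℝ 1 v) (r ω : ℝ) :
    gder v r ω + hder v r ω = r * divVec v (Pc r ω) := by
  rw [divVec_eq v hv]
  simp only [gder, hder, fderiv_dir, PiLp.add_apply, PiLp.smul_apply, smul_eq_mul]
  linear_combination (r * ((fderiv ℝ v (Pc r ω)) s0 0 + (fderiv ℝ v (Pc r ω)) s1 1)) *
    Real.sin_sq_add_cos_sq ω

lemma continuous_Pc : Continuous fun p : ℝ × ℝ => Pc p.1 p.2 := by
  simp only [Pc, vec2_eq_smul]
  exact ((continuous_fst.mul (Real.continuous_cos.comp continuous_snd)).smul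
    continuous_const).add
    ((continuous_fst.mul (Real.continuous_sin.comp continuous_snd)).smul continuous_const)

lemma continuous_vcomp (v : E2 → E2) (hv : ContDiff ℝ 1 v) (i : Fin 2) :
    Continuous fun p : ℝ × ℝ => v (Pc p.1 p.2) i :=
  (EuclideanSpace.proj i).continuous.comp ((hv.continuous).comp continuous_Pc)

lemma continuous_gder (v : E2 → E2) (hv : ContDiff ℝ 1 v) :
    Continuous fun p : ℝ × ℝ => gder v p.1 p.2 := by
  have hD : Continuous fun p : ℝ × ℝ => fderiv ℝ v (Pc p.1 p.2) :=
    (hv.continuous_fderiv one_ne_zero).comp continuous_Pc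
  have hdir : Continuous fun p : ℝ × ℝ => vec2 (cos p.2) (sin p.2) := by
    simp only [vec2_eq_smul]
    exact ((Real.continuous_cos.comp continuous_snd).smul continuous_const).add
      ((Real.continuous_sin.comp continuous_snd).smul continuous_const)
  have hDd : Continuous fun p : ℝ × ℝ => fderiv ℝ v (Pc p.1 p.2) (vec2 (cos p.2) (sin p.2)) :=
    hD.clm_apply hdir
  have c0 := (EuclideanSpace.proj (0:Fin 2)).continuous.comp hDd
  have c1 := (EuclideanSpace.proj (1:Fin 2)).continuous.comp hDd
  have ccos : Continuous fun p : ℝ × ℝ => cos p.2 := Real.continuous_cos.comp continuous_snd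
  have csin : Continuous fun p : ℝ × ℝ => sin p.2 := Real.continuous_sin.comp continuous_snd
  exact (((continuous_vcomp v hv 0).mul ccos).add ((continuous_vcomp v hv 1).mul csin)).add
    (continuous_fst.mul ((c0.mul ccos).add (c1.mul csin)))

lemma continuous_hder (v : E2 → E2) (hv : ContDiff ℝ 1 v) :
    Continuous fun p : ℝ × ℝ => hder v p.1 p.2 := by
  have hD : Continuous fun p : ℝ × ℝ => fderiv ℝ v (Pc p.1 p.2) :=
    (hv.continuous_fderiv one_ne_zero).comp continuous_Pc
  have ccos : Continuous fun p : ℝ × ℝ => cos p.2 := Real.continuous_cos.comp continuous_snd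
  have csin : Continuous fun p : ℝ × ℝ => sin p.2 := Real.continuous_sin.comp continuous_snd
  have hdir : Continuous fun p : ℝ × ℝ => vec2 (p.1 * -sin p.2) (p.1 * cos p.2) := by
    simp only [vec2_eq_smul]
    exact ((continuous_fst.mul csin.neg).smul continuous_const).add
      ((continuous_fst.mul ccos).smul continuous_const)
  have hDd := hD.clm_apply hdir
  have c0 := (EuclideanSpace.proj (0:Fin 2)).continuous.comp hDd
  have c1 := (EuclideanSpace.proj (1:Fin 2)).continuous.comp hDd
  exact ((c0.mul csin.neg).add (c1.mul ccos)).add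
    (((continuous_vcomp v hv 0).mul ccos.neg).add ((continuous_vcomp v hv 1).mul csin.neg))

end DTVAux


namespace DTVAux
open Real

def phi2 : E2 ≃ᵐ (ℝ × ℝ) :=
  (MeasurableEquiv.toLp 2 (Fin 2 → ℝ)).symm.trans MeasurableEquiv.finTwoArrow

lemma phi2_mp : MeasurePreserving phi2 :=
  (volume_preserving_finTwoArrow ℝ).comp (EuclideanSpace.volume_preserving_symm_measurableEquiv_toLp (Fin 2))

lemma phi2_symm_apply (p : ℝ × ℝ) : phi2.symm p = vec2 p.1 p.2 := by
  ext i; fin_cases i <;> rfl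

lemma norm_e2 (x : E2) : ‖x‖ = Real.sqrt (x 0 ^ 2 + x 1 ^ 2) := by
  rw [EuclideanSpace.norm_eq]; norm_num [Fin.sum_univ_two, sq]

lemma norm_Pc (r ω : ℝ) : ‖Pc r ω‖ = |r| := by
  rw [norm_e2]
  have h : (Pc r ω) 0 ^ 2 + (Pc r ω) 1 ^ 2 = r ^ 2 := by
    show (r * cos ω) ^ 2 + (r * sin ω) ^ 2 = r ^ 2
    linear_combination r ^ 2 * Real.sin_sq_add_cos_sq ω
  rw [h, Real.sqrt_sq_eq_abs]

lemma divergence_ball (v : E2 → E2) (hv : ContDiff ℝ 1 v) :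
    ∫ x in Metric.closedBall (0:E2) 1, divVec v x
      = ∫ ω in (-π)..π,
          (v (vec2 (cos ω) (sin ω)) 0 * cos ω + v (vec2 (cos ω) (sin ω)) 1 * sin ω) := by
  have hpi : (-π : ℝ) ≤ π := by linarith [Real.pi_pos]
  set S : Set (ℝ × ℝ) := {q : ℝ × ℝ | q.1 ≤ 1} with hS_def
  have hSmeas : MeasurableSet S := measurableSet_le measurable_fst measurable_const
  set Kg : ℝ × ℝ → ℝ := S.indicator (fun q => gder v q.1 q.2) with hKg_def
  set Kh : ℝ × ℝ → ℝ := S.indicator (fun q => hder v q.1 q.2) with hKh_def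
  set Find : E2 → ℝ := (Metric.closedBall (0:E2) 1).indicator (divVec v) with hFind_def
  -- Step 1 : transfer to ℝ × ℝ and polar coordinates
  have step1 : ∫ x in Metric.closedBall (0:E2) 1, divVec v x
      = ∫ p in polarCoord.target, p.1 • Find (vec2 (polarCoord.symm p).1 (polarCoord.symm p).2) := by
    rw [← integral_indicator measurableSet_closedBall, ← hFind_def,
      ← (MeasurePreserving.symm phi2 phi2_mp).integral_comp' Find]
    simp_rw [phi2_symm_apply]
    rw [← integral_comp_polarCoord_symm (fun p : ℝ × ℝ => Find (vec2 p.1 p.2))]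
  -- Step 2 : pointwise identification of the integrand on the target
  have step2 : ∀ p ∈ polarCoord.target,
      p.1 • Find (vec2 (polarCoord.symm p).1 (polarCoord.symm p).2) = Kg p + Kh p := by
    rintro ⟨r, ω⟩ hp
    obtain ⟨hr, hω⟩ := hp
    have hr' : (0:ℝ) < r := hr
    have hsymm : vec2 (polarCoord.symm (r, ω)).1 (polarCoord.symm (r, ω)).2 = Pc r ω := rfl
    rw [hsymm]
    by_cases h1 : r ≤ 1
    · have hmem : Pc r ω ∈ Metric.closedBall (0:E2) 1 := by
        rw [Metric.mem_closedBall, dist_zero_right, norm_Pc, abs_of_pos hr']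
        exact h1
      have hmemS : ((r, ω) : ℝ × ℝ) ∈ S := h1
      rw [hFind_def, Set.indicator_of_mem hmem, hKg_def, hKh_def,
        Set.indicator_of_mem hmemS, Set.indicator_of_mem hmemS]
      rw [smul_eq_mul, ← gder_add_hder v hv r ω]
    · have hmem : Pc r ω ∉ Metric.closedBall (0:E2) 1 := by
        rw [Metric.mem_closedBall, dist_zero_right, norm_Pc, abs_of_pos hr']
        exact h1
      have hmemS : ((r, ω) : ℝ × ℝ) ∉ S := h1
      rw [hFind_def, Set.indicator_of_notMem hmem, hKg_def, hKh_def,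
        Set.indicator_of_notMem hmemS, Set.indicator_of_notMem hmemS]
      simp
  rw [step1, setIntegral_congr_fun polarCoord.open_target.measurableSet step2]
  -- Integrability
  have hC : IsCompact (Set.Icc (0:ℝ) 1 ×ˢ Set.Icc (-π) π) := isCompact_Icc.prod isCompact_Icc
  have hsub : S ∩ polarCoord.target ⊆ Set.Icc (0:ℝ) 1 ×ˢ Set.Icc (-π) π := by
    rintro ⟨r, ω⟩ ⟨h1, h2⟩
    obtain ⟨hr, hω⟩ := h2
    exact ⟨⟨le_of_lt hr, h1⟩, ⟨le_of_lt hω.1, le_of_lt hω.2⟩⟩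
  have hIg : IntegrableOn Kg polarCoord.target := by
    rw [hKg_def, IntegrableOn, integrable_indicator_iff hSmeas, IntegrableOn,
      Measure.restrict_restrict hSmeas]
    exact (((continuous_gder v hv).continuousOn.integrableOn_compact hC)).mono_set hsub
  have hIh : IntegrableOn Kh polarCoord.target := by
    rw [hKh_def, IntegrableOn, integrable_indicator_iff hSmeas, IntegrableOn,
      Measure.restrict_restrict hSmeas]
    exact (((continuous_hder v hv).continuousOn.integrableOn_compact hC)).mono_set hsub
  rw [integral_add hIg hIh]
  -- the h-part vanishes
  have htarget : polarCoord.target = Set.Ioi (0:ℝ) ×ˢ Set.Ioo (-π) π := rfl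
  have hKh_zero : ∫ p in polarCoord.target, Kh p = 0 := by
    rw [htarget, Measure.volume_eq_prod, ← Measure.prod_restrict]
    rw [integral_prod _ (by
      rw [Measure.prod_restrict, ← Measure.volume_eq_prod, ← htarget]; exact hIh)]
    have inner0 : ∀ r : ℝ, (∫ ω in Set.Ioo (-π) π, Kh (r, ω)) = 0 := by
      intro r
      by_cases h1 : r ≤ 1
      · have heq : ∀ ω : ℝ, Kh (r, ω) = hder v r ω := by
          intro ω'
          have hm : ((r, ω') : ℝ × ℝ) ∈ S := by rw [hS_def]; exact h1
          rw [hKh_def, Set.indicator_of_mem hm]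
        simp_rw [heq]
        have hint : IntervalIntegrable (fun ω => hder v r ω) volume (-π) π :=
          ((continuous_hder v hv).comp (Continuous.prodMk_right r)).intervalIntegrable _ _
        rw [← integral_Ioc_eq_integral_Ioo, ← intervalIntegral.integral_of_le hpi,
          intervalIntegral.integral_eq_sub_of_hasDerivAt
            (fun ω _ => hasDerivAt_hf v hv r ω) hint]
        simp [hf, Pc]
      · have heq : ∀ ω : ℝ, Kh (r, ω) = 0 := by
          intro ω'
          have hm : ¬ ((r, ω') : ℝ × ℝ) ∈ S := by rw [hS_def]; exact h1
          rw [hKh_def, Set.indicator_of_notMem hm]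
        simp_rw [heq]
        simp
    simp_rw [inner0]
    simp
  rw [hKh_zero, add_zero]
  -- the g-part
  rw [htarget, Measure.volume_eq_prod, ← Measure.prod_restrict]
  rw [integral_prod_symm _ (by
    rw [Measure.prod_restrict, ← Measure.volume_eq_prod, ← htarget]; exact hIg)]
  have inner1 : ∀ ω : ℝ, (∫ r in Set.Ioi (0:ℝ), Kg (r, ω)) = gf v 1 ω := by
    intro ω
    have heq : ∀ r : ℝ, Kg (r, ω) = Set.indicator (Set.Iic (1:ℝ)) (fun r => gder v r ω) r := by
      intro r
      simp [hKg_def, Set.indicator_apply, hS_def, Set.mem_Iic]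
    simp_rw [heq]
    rw [setIntegral_indicator measurableSet_Iic, Set.Ioi_inter_Iic,
      ← intervalIntegral.integral_of_le zero_le_one]
    have hint : IntervalIntegrable (fun r => gder v r ω) volume 0 1 :=
      ((continuous_gder v hv).comp (continuous_id.prodMk continuous_const)).intervalIntegrable _ _
    rw [intervalIntegral.integral_eq_sub_of_hasDerivAt
      (fun r _ => hasDerivAt_gf v hv ω r) hint]
    have : gf v 0 ω = 0 := by simp [gf]
    rw [this, sub_zero]
  simp_rw [inner1]
  rw [← integral_Ioc_eq_integral_Ioo, ← intervalIntegral.integral_of_le hpi]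
  apply intervalIntegral.integral_congr
  intro ω _
  simp [gf, Pc]

end DTVAux


namespace DTVAux
open Real

lemma support_bound {a θ : ℝ} (ha : 0 < a) {x : E2} (hx : x ∈ Ellip a θ) (ω : ℝ) :
    x 0 * cos ω + x 1 * sin ω ≤ Real.sqrt (cos (ω - θ) ^ 2 + a ^ 2 * sin (ω - θ) ^ 2) := by
  set p : ℝ := x 0 * cos θ + x 1 * sin θ with hp
  set q : ℝ := -(x 0) * sin θ + x 1 * cos θ with hq
  have hEll : p ^ 2 + (q / a) ^ 2 ≤ 1 := hx
  have ha' : a ≠ 0 := ne_of_gt ha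
  have hyp : a ^ 2 * p ^ 2 + q ^ 2 ≤ a ^ 2 := by
    have h1 : a ^ 2 * p ^ 2 + q ^ 2 = (p ^ 2 + (q / a) ^ 2) * a ^ 2 := by
      field_simp
    rw [h1]
    calc (p ^ 2 + (q / a) ^ 2) * a ^ 2 ≤ 1 * a ^ 2 :=
          mul_le_mul_of_nonneg_right hEll (sq_nonneg a)
      _ = a ^ 2 := one_mul _
  set c : ℝ := cos (ω - θ) with hc
  set s : ℝ := sin (ω - θ) with hs
  have hL : x 0 * cos ω + x 1 * sin ω = p * c + q * s := by
    rw [hc, hs, Real.cos_sub, Real.sin_sub, hp, hq]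
    linear_combination (-(x 0 * cos ω) - x 1 * sin ω) * Real.sin_sq_add_cos_sq θ
  have hsq : (p * c + q * s) ^ 2 ≤ c ^ 2 + a ^ 2 * s ^ 2 := by
    have key : a ^ 2 * (p * c + q * s) ^ 2 ≤ a ^ 2 * (c ^ 2 + a ^ 2 * s ^ 2) := by
      nlinarith [sq_nonneg (a ^ 2 * p * s - q * c), sq_nonneg c, sq_nonneg s,
        mul_le_mul_of_nonneg_right hyp (add_nonneg (sq_nonneg c)
          (mul_nonneg (sq_nonneg a) (sq_nonneg s)))]
    have ha2 : 0 < a ^ 2 := by positivity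
    exact le_of_mul_le_mul_left key ha2
  rw [hL]
  calc p * c + q * s ≤ |p * c + q * s| := le_abs_self _
    _ = Real.sqrt ((p * c + q * s) ^ 2) := (Real.sqrt_sq_eq_abs _).symm
    _ ≤ Real.sqrt (c ^ 2 + a ^ 2 * s ^ 2) := Real.sqrt_le_sqrt hsq

lemma shift_integral (a θ : ℝ) :
    (∫ ω in (-π)..π, Real.sqrt (cos (ω - θ) ^ 2 + a ^ 2 * sin (ω - θ) ^ 2))
      = ∫ ω in (0:ℝ)..(2 * π), Real.sqrt (cos ω ^ 2 + a ^ 2 * sin ω ^ 2) := by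
  have hper : Function.Periodic (fun ω => Real.sqrt (cos ω ^ 2 + a ^ 2 * sin ω ^ 2)) (2 * π) := by
    intro x; simp [Real.cos_add_two_pi, Real.sin_add_two_pi]
  have h2 : π - θ = (-π - θ) + 2 * π := by ring
  calc (∫ ω in (-π)..π, Real.sqrt (cos (ω - θ) ^ 2 + a ^ 2 * sin (ω - θ) ^ 2))
      = ∫ ω in (-π - θ)..(π - θ), Real.sqrt (cos ω ^ 2 + a ^ 2 * sin ω ^ 2) :=
        intervalIntegral.integral_comp_sub_right
          (f := fun ω => Real.sqrt (cos ω ^ 2 + a ^ 2 * sin ω ^ 2)) θ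
    _ = ∫ ω in (0:ℝ)..(2 * π), Real.sqrt (cos ω ^ 2 + a ^ 2 * sin ω ^ 2) := by
        rw [h2, hper.intervalIntegral_add_eq (-π - θ) 0, zero_add]

end DTVAux


namespace DTVAux
open Real

def XX (θ : ℝ) (x : E2) : ℝ := x 0 * cos θ + x 1 * sin θ
def YY (θ : ℝ) (x : E2) : ℝ := -(x 0) * sin θ + x 1 * cos θ
def nn (a θ : ℝ) (x : E2) : ℝ := Real.sqrt (XX θ x ^ 2 + a ^ 2 * YY θ x ^ 2)
def Vf (a θ : ℝ) (x : E2) : E2 :=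
  (nn a θ x)⁻¹ • ((XX θ x * cos θ - a ^ 2 * YY θ x * sin θ) • s0 +
    (XX θ x * sin θ + a ^ 2 * YY θ x * cos θ) • s1)
def vopt (a θ : ℝ) (ψ : ℝ → ℝ) (x : E2) : E2 := ψ (‖x‖ ^ 2) • Vf a θ x

lemma vopt_apply0 (a θ : ℝ) (ψ : ℝ → ℝ) (x : E2) :
    vopt a θ ψ x 0 = ψ (‖x‖ ^ 2) * ((nn a θ x)⁻¹ *
      (XX θ x * cos θ - a ^ 2 * YY θ x * sin θ)) := by
  simp [vopt, Vf, s0, s1, PiLp.smul_apply, PiLp.add_apply, EuclideanSpace.single_apply,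
    smul_eq_mul]

lemma vopt_apply1 (a θ : ℝ) (ψ : ℝ → ℝ) (x : E2) :
    vopt a θ ψ x 1 = ψ (‖x‖ ^ 2) * ((nn a θ x)⁻¹ *
      (XX θ x * sin θ + a ^ 2 * YY θ x * cos θ)) := by
  simp [vopt, Vf, s0, s1, PiLp.smul_apply, PiLp.add_apply, EuclideanSpace.single_apply,
    smul_eq_mul]

lemma quad_pos {a : ℝ} (θ : ℝ) (ha : 0 < a) {x : E2} (hx : x ≠ 0) :
    0 < XX θ x ^ 2 + a ^ 2 * YY θ x ^ 2 := by
  by_contra h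
  push_neg at h
  have hX : XX θ x = 0 := by
    have h1 : XX θ x ^ 2 ≤ 0 := by
      nlinarith [mul_nonneg (sq_nonneg a) (sq_nonneg (YY θ x))]
    exact sq_eq_zero_iff.mp (le_antisymm h1 (sq_nonneg _))
  have hY : YY θ x = 0 := by
    have h1 : a ^ 2 * YY θ x ^ 2 ≤ 0 := by nlinarith [sq_nonneg (XX θ x)]
    have h2 : YY θ x ^ 2 ≤ 0 := by nlinarith [mul_pos ha ha, sq_nonneg (YY θ x)]
    exact sq_eq_zero_iff.mp (le_antisymm h2 (sq_nonneg _))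
  have hx0 : x 0 = 0 := by
    have h1 : x 0 = XX θ x * cos θ - YY θ x * sin θ := by
      simp only [XX, YY]
      linear_combination (-(x 0)) * Real.sin_sq_add_cos_sq θ
    rw [h1, hX, hY]; ring
  have hx1 : x 1 = 0 := by
    have h1 : x 1 = XX θ x * sin θ + YY θ x * cos θ := by
      simp only [XX, YY]
      linear_combination (-(x 1)) * Real.sin_sq_add_cos_sq θ
    rw [h1, hX, hY]; ring
  exact hx (e2_ext (by simpa using hx0) (by simpa using hx1))

lemma nn_pos {a : ℝ} (θ : ℝ) (ha : 0 < a) {x : E2} (hx : x ≠ 0) : 0 < nn a θ x :=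
  Real.sqrt_pos.mpr (quad_pos θ ha hx)

lemma contDiff_apply2 (i : Fin 2) : ContDiff ℝ 1 (fun x : E2 => x i) := by
  exact (EuclideanSpace.proj i : E2 →L[ℝ] ℝ).contDiff

lemma contDiff_XX (θ : ℝ) : ContDiff ℝ 1 (XX θ) := by
  unfold XX
  exact ((contDiff_apply2 0).mul contDiff_const).add ((contDiff_apply2 1).mul contDiff_const)

lemma contDiff_YY (θ : ℝ) : ContDiff ℝ 1 (YY θ) := by
  unfold YY
  exact (((contDiff_apply2 0).neg).mul contDiff_const).add
    ((contDiff_apply2 1).mul contDiff_const)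

lemma contDiff_quad (a θ : ℝ) : ContDiff ℝ 1 (fun x => XX θ x ^ 2 + a ^ 2 * YY θ x ^ 2) :=
  ((contDiff_XX θ).pow 2).add (contDiff_const.mul ((contDiff_YY θ).pow 2))

lemma contDiffAt_Vf {a : ℝ} (θ : ℝ) (ha : 0 < a) {x : E2} (hx : x ≠ 0) :
    ContDiffAt ℝ 1 (Vf a θ) x := by
  have hnn : ContDiffAt ℝ 1 (nn a θ) x := by
    have hq := (contDiff_quad a θ).contDiffAt (x := x)
    exact (Real.contDiffAt_sqrt (quad_pos θ ha hx).ne').comp x hq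
  have hninv : ContDiffAt ℝ 1 (fun y => (nn a θ y)⁻¹) x := hnn.inv (nn_pos θ ha hx).ne'
  have hA : ContDiff ℝ 1 (fun y => (XX θ y * cos θ - a ^ 2 * YY θ y * sin θ)) :=
    ((contDiff_XX θ).mul contDiff_const).sub ((contDiff_const.mul (contDiff_YY θ)).mul contDiff_const)
  have hB : ContDiff ℝ 1 (fun y => (XX θ y * sin θ + a ^ 2 * YY θ y * cos θ)) :=
    ((contDiff_XX θ).mul contDiff_const).add ((contDiff_const.mul (contDiff_YY θ)).mul contDiff_const)
  have hvec : ContDiff ℝ 1 (fun y => (XX θ y * cos θ - a ^ 2 * YY θ y * sin θ) • s0 +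
      (XX θ y * sin θ + a ^ 2 * YY θ y * cos θ) • s1) :=
    (hA.smul contDiff_const).add (hB.smul contDiff_const)
  exact hninv.smul hvec.contDiffAt

lemma contDiff_normsq : ContDiff ℝ 1 (fun x : E2 => ‖x‖ ^ 2) :=
  contDiff_norm_sq (𝕜 := ℝ) (n := 1)

lemma contDiff_vopt {a : ℝ} (θ : ℝ) (ha : 0 < a) {ψ : ℝ → ℝ} (hψ : ContDiff ℝ 1 ψ)
    (hψ0 : ∀ t ≤ (1:ℝ)/2, ψ t = 0) : ContDiff ℝ 1 (vopt a θ ψ) := by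
  rw [contDiff_iff_contDiffAt]
  intro x
  by_cases hx : x = 0
  · subst hx
    have hopen : IsOpen {y : E2 | ‖y‖ ^ 2 < 1/2} :=
      isOpen_lt contDiff_normsq.continuous continuous_const
    have hmem : (0:E2) ∈ {y : E2 | ‖y‖ ^ 2 < 1/2} := by simp
    have hev : vopt a θ ψ =ᶠ[𝓝 (0:E2)] fun _ => (0:E2) := by
      filter_upwards [hopen.mem_nhds hmem] with y hy
      have : ψ (‖y‖ ^ 2) = 0 := hψ0 _ (le_of_lt hy)
      simp [vopt, this]
    exact (contDiffAt_const (c := (0:E2))).congr_of_eventuallyEq hev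
  · exact ((hψ.comp contDiff_normsq).contDiffAt).smul (contDiffAt_Vf θ ha hx)

lemma vopt_mem_Ellip {a : ℝ} (θ : ℝ) (ha : 0 < a) {ψ : ℝ → ℝ}
    (hψnn : ∀ t, 0 ≤ ψ t) (hψle : ∀ t, ψ t ≤ 1) (x : E2) :
    vopt a θ ψ x ∈ Ellip a θ := by
  by_cases hx : x = 0
  · subst hx
    have h0 : XX θ (0:E2) = 0 := by simp [XX]
    have h1 : YY θ (0:E2) = 0 := by simp [YY]
    rw [Ellip, Set.mem_setOf_eq, vopt_apply0, vopt_apply1, h0, h1]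
    norm_num
  · set t := ψ (‖x‖ ^ 2) with ht
    set X := XX θ x with hX
    set Y := YY θ x with hY
    set N := nn a θ x with hN
    have hNpos : 0 < N := nn_pos θ ha hx
    have hN2 : N ^ 2 = X ^ 2 + a ^ 2 * Y ^ 2 := Real.sq_sqrt (by positivity)
    rw [Ellip, Set.mem_setOf_eq, vopt_apply0, vopt_apply1, ← ht, ← hX, ← hY, ← hN]
    have e1 : t * (N⁻¹ * (X * cos θ - a ^ 2 * Y * sin θ)) * cos θ
        + t * (N⁻¹ * (X * sin θ + a ^ 2 * Y * cos θ)) * sin θ = t * N⁻¹ * X := by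
      linear_combination (t * N⁻¹ * X) * Real.sin_sq_add_cos_sq θ
    have e2 : -(t * (N⁻¹ * (X * cos θ - a ^ 2 * Y * sin θ))) * sin θ
        + t * (N⁻¹ * (X * sin θ + a ^ 2 * Y * cos θ)) * cos θ = t * N⁻¹ * (a ^ 2 * Y) := by
      linear_combination (t * N⁻¹ * a ^ 2 * Y) * Real.sin_sq_add_cos_sq θ
    rw [e1, e2]
    have e3 : (t * N⁻¹ * X) ^ 2 + (t * N⁻¹ * (a ^ 2 * Y) / a) ^ 2
        = t ^ 2 * ((X ^ 2 + a ^ 2 * Y ^ 2) / N ^ 2) := by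
      field_simp
    rw [e3, ← hN2, div_self (by positivity : N ^ 2 ≠ 0), mul_one]
    have h1 := hψnn (‖x‖ ^ 2)
    have h2 := hψle (‖x‖ ^ 2)
    nlinarith [h1, h2]

lemma vopt_boundary {a : ℝ} (θ : ℝ) (ha : 0 < a) {ψ : ℝ → ℝ} (hψ1 : ψ 1 = 1) (ω : ℝ) :
    vopt a θ ψ (vec2 (cos ω) (sin ω)) 0 * cos ω
      + vopt a θ ψ (vec2 (cos ω) (sin ω)) 1 * sin ω
      = Real.sqrt (cos (ω - θ) ^ 2 + a ^ 2 * sin (ω - θ) ^ 2) := by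
  set x : E2 := vec2 (cos ω) (sin ω) with hxdef
  have hnorm : ‖x‖ ^ 2 = 1 := by
    rw [hxdef, norm_e2]
    have : (vec2 (cos ω) (sin ω)) 0 ^ 2 + (vec2 (cos ω) (sin ω)) 1 ^ 2 = 1 := by
      show cos ω ^ 2 + sin ω ^ 2 = 1
      linear_combination Real.sin_sq_add_cos_sq ω
    rw [this, Real.sqrt_one, one_pow]
  have hXX : XX θ x = cos (ω - θ) := by
    show cos ω * cos θ + sin ω * sin θ = cos (ω - θ)
    rw [Real.cos_sub]
  have hYY : YY θ x = sin (ω - θ) := by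
    show -(cos ω) * sin θ + sin ω * cos θ = sin (ω - θ)
    rw [Real.sin_sub]; ring
  rw [vopt_apply0, vopt_apply1, hnorm, hψ1, hXX, hYY]
  set X := cos (ω - θ) with hX
  set Y := sin (ω - θ) with hY
  have hnn : nn a θ x = Real.sqrt (X ^ 2 + a ^ 2 * Y ^ 2) := by
    rw [nn, hXX, hYY]
  rw [hnn]
  have hcomb : (X * cos θ - a ^ 2 * Y * sin θ) * cos ω
      + (X * sin θ + a ^ 2 * Y * cos θ) * sin ω = X ^ 2 + a ^ 2 * Y ^ 2 := by
    rw [hX, hY, Real.cos_sub, Real.sin_sub]; ring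
  have expand : 1 * ((Real.sqrt (X ^ 2 + a ^ 2 * Y ^ 2))⁻¹ * (X * cos θ - a ^ 2 * Y * sin θ)) * cos ω
      + 1 * ((Real.sqrt (X ^ 2 + a ^ 2 * Y ^ 2))⁻¹ * (X * sin θ + a ^ 2 * Y * cos θ)) * sin ω
      = (Real.sqrt (X ^ 2 + a ^ 2 * Y ^ 2))⁻¹ * ((X * cos θ - a ^ 2 * Y * sin θ) * cos ω
        + (X * sin θ + a ^ 2 * Y * cos θ) * sin ω) := by ring
  rw [expand, hcomb]
  rw [show (Real.sqrt (X ^ 2 + a ^ 2 * Y ^ 2))⁻¹ * (X ^ 2 + a ^ 2 * Y ^ 2)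
      = (X ^ 2 + a ^ 2 * Y ^ 2) / Real.sqrt (X ^ 2 + a ^ 2 * Y ^ 2) from
    (by rw [div_eq_mul_inv, mul_comm]), Real.div_sqrt]

end DTVAux


open Real DTVAux

/-- `DTV^{a,θ}` of the characteristic function of the closed unit disk. -/
theorem dtv_unit_disk (Ω : Set E2) (hΩo : IsOpen Ω) (hΩb : Bornology.IsBounded Ω)
    (a θ : ℝ) (ha : 0 < a) (ha1 : a ≤ 1)
    (hsub : Metric.closedBall (0 : E2) 1 ⊆ Ω) :
    DTV Ω a θ ((Metric.closedBall (0 : E2) 1).indicator fun _ => (1 : ℝ)) =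
      ENNReal.ofReal (∫ ω in (0:ℝ)..(2 * Real.pi),
        Real.sqrt (Real.cos ω ^ 2 + a ^ 2 * Real.sin ω ^ 2)) := by
  classical
  have hpi : (-π : ℝ) ≤ π := by linarith [Real.pi_pos]
  set u : E2 → ℝ := (Metric.closedBall (0 : E2) 1).indicator fun _ => (1 : ℝ) with hu
  -- value of the pairing for any C¹ field
  have hcompute : ∀ v : E2 → E2, ContDiff ℝ 1 v →
      (∫ x in Ω, u x * divVec v x) =
      ∫ ω in (-π)..π, (v (vec2 (cos ω) (sin ω)) 0 * cos ω
        + v (vec2 (cos ω) (sin ω)) 1 * sin ω) := by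
    intro v hv
    have h1 : ∀ x, u x * divVec v x
        = (Metric.closedBall (0:E2) 1).indicator (divVec v) x := by
      intro x
      by_cases hx : x ∈ Metric.closedBall (0:E2) 1 <;>
        simp [hu, Set.indicator_of_mem, Set.indicator_of_notMem, hx]
    calc ∫ x in Ω, u x * divVec v x
        = ∫ x in Ω, (Metric.closedBall (0:E2) 1).indicator (divVec v) x :=
          setIntegral_congr_fun hΩo.measurableSet (fun x _ => h1 x)
      _ = ∫ x in Ω ∩ Metric.closedBall (0:E2) 1, divVec v x :=
          setIntegral_indicator measurableSet_closedBall
      _ = ∫ x in Metric.closedBall (0:E2) 1, divVec v x := by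
          rw [Set.inter_eq_self_of_subset_right hsub]
      _ = _ := divergence_ball v hv
  have hvecont : Continuous fun ω : ℝ => vec2 (cos ω) (sin ω) := by
    simp only [vec2_eq_smul]
    exact (Real.continuous_cos.smul continuous_const).add
      (Real.continuous_sin.smul continuous_const)
  have hsphere : ∀ ω : ℝ, vec2 (cos ω) (sin ω) ∈ Metric.closedBall (0:E2) 1 := by
    intro ω
    rw [Metric.mem_closedBall, dist_zero_right, norm_e2]
    have h2 : (vec2 (cos ω) (sin ω)) 0 ^ 2 + (vec2 (cos ω) (sin ω)) 1 ^ 2 = 1 := by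
      show cos ω ^ 2 + sin ω ^ 2 = 1
      linear_combination Real.sin_sq_add_cos_sq ω
    rw [h2, Real.sqrt_one]
  have hmajcont : Continuous fun ω : ℝ => Real.sqrt (cos (ω - θ) ^ 2 + a ^ 2 * sin (ω - θ) ^ 2) := by
    apply Real.continuous_sqrt.comp
    exact (((Real.continuous_cos.comp (continuous_id.sub continuous_const)).pow 2).add
      (continuous_const.mul
        ((Real.continuous_sin.comp (continuous_id.sub continuous_const)).pow 2)))
  -- upper bound
  have hub : ∀ v ∈ {v : E2 → E2 | Cc1 Ω v ∧ ∀ x ∈ Ω, v x ∈ Ellip a θ},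
      ENNReal.ofReal (∫ x in Ω, u x * divVec v x) ≤
        ENNReal.ofReal (∫ ω in (0:ℝ)..(2 * π), Real.sqrt (cos ω ^ 2 + a ^ 2 * sin ω ^ 2)) := by
    rintro v ⟨⟨hv1, hv2, hv3⟩, hvE⟩
    rw [hcompute v hv1]
    apply ENNReal.ofReal_le_ofReal
    rw [← shift_integral a θ]
    have hbcont : Continuous fun ω : ℝ => (v (vec2 (cos ω) (sin ω)) 0 * cos ω
        + v (vec2 (cos ω) (sin ω)) 1 * sin ω) := by
      have hc0 : Continuous fun ω : ℝ => v (vec2 (cos ω) (sin ω)) 0 :=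
        (EuclideanSpace.proj (0 : Fin 2)).continuous.comp (hv1.continuous.comp hvecont)
      have hc1 : Continuous fun ω : ℝ => v (vec2 (cos ω) (sin ω)) 1 :=
        (EuclideanSpace.proj (1 : Fin 2)).continuous.comp (hv1.continuous.comp hvecont)
      exact (hc0.mul Real.continuous_cos).add (hc1.mul Real.continuous_sin)
    apply intervalIntegral.integral_mono_on hpi (hbcont.intervalIntegrable _ _)
      (hmajcont.intervalIntegrable _ _)
    intro ω _
    exact support_bound ha (hvE _ (hsub (hsphere ω))) ω
  -- construction of the optimal field
  obtain ⟨δ, hδpos, hδ⟩ :=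
    (isCompact_closedBall (0:E2) 1).exists_thickening_subset_open hΩo hsub
  have hball : Metric.closedBall (0:E2) (1 + δ/2) ⊆ Ω := by
    intro x hx
    apply hδ
    rw [thickening_closedBall hδpos zero_le_one]
    exact Metric.closedBall_subset_ball (by linarith) hx
  set ρ : ℝ := min (1/2) (δ/2) with hρ
  have hρpos : 0 < ρ := lt_min (by norm_num) (by linarith)
  have hρhalf : ρ ≤ 1/2 := min_le_left _ _
  have hρδ : ρ ≤ δ/2 := min_le_right _ _
  set bump : ContDiffBump (1:ℝ) := ⟨ρ/2, ρ, by linarith, by linarith⟩ with hbump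
  set ψ : ℝ → ℝ := fun t => bump t with hψ
  have hψcd : ContDiff ℝ 1 ψ := bump.contDiff
  have hψ1 : ψ 1 = 1 := bump.one_of_mem_closedBall (Metric.mem_closedBall_self bump.rIn_pos.le)
  have hψ0 : ∀ t ≤ (1:ℝ)/2, ψ t = 0 := by
    intro t ht
    apply bump.zero_of_le_dist
    rw [Real.dist_eq, abs_of_nonpos (by linarith)]
    show ρ ≤ -(t - 1)
    linarith
  have hψnn : ∀ t, 0 ≤ ψ t := fun t => bump.nonneg' t
  have hψle : ∀ t, ψ t ≤ 1 := fun t => bump.le_one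
  set v₀ : E2 → E2 := vopt a θ ψ with hv₀
  have hv₀cd : ContDiff ℝ 1 v₀ := contDiff_vopt θ ha hψcd hψ0
  have hv₀zero : ∀ x : E2, x ∉ Metric.closedBall (0:E2) (1 + δ/2) → v₀ x = 0 := by
    intro x hx
    rw [Metric.mem_closedBall, dist_zero_right, not_le] at hx
    have hx2 : 1 + ρ < ‖x‖ ^ 2 := by nlinarith [norm_nonneg x]
    have : ψ (‖x‖ ^ 2) = 0 := by
      apply bump.zero_of_le_dist
      rw [Real.dist_eq, abs_of_nonneg (by linarith)]
      linarith
    simp [hv₀, vopt, this]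
  have hv₀cs : HasCompactSupport v₀ :=
    HasCompactSupport.intro (isCompact_closedBall _ _) hv₀zero
  have hv₀ts : tsupport v₀ ⊆ Ω := by
    apply Set.Subset.trans _ hball
    apply closure_minimal _ Metric.isClosed_closedBall
    intro x hx
    by_contra hxx
    exact hx (hv₀zero x hxx)
  have hv₀mem : v₀ ∈ {v : E2 → E2 | Cc1 Ω v ∧ ∀ x ∈ Ω, v x ∈ Ellip a θ} :=
    ⟨⟨hv₀cd, hv₀cs, hv₀ts⟩, fun x _ => vopt_mem_Ellip θ ha hψnn hψle x⟩
  have hval : ENNReal.ofReal (∫ x in Ω, u x * divVec v₀ x)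
      = ENNReal.ofReal (∫ ω in (0:ℝ)..(2 * π), Real.sqrt (cos ω ^ 2 + a ^ 2 * sin ω ^ 2)) := by
    rw [hcompute v₀ hv₀cd]
    congr 1
    rw [← shift_integral a θ]
    apply intervalIntegral.integral_congr
    intro ω _
    exact vopt_boundary θ ha hψ1 ω
  apply le_antisymm
  · exact iSup₂_le hub
  · rw [DTV, ← hval]
    exact le_iSup₂ (f := fun v _ => ENNReal.ofReal (∫ x in Ω, u x * divVec v x)) v₀ hv₀mem
end
end

section
/- Let 0 < b < 1, p > 0, and let u₂ be the characteristic function of the closed ellipse pE^{b,0} = { (x₁,x₂) : (x₁/p)² + (x₂/(pb))² ≤ 1 }, with pE^{b,0} ⊂ Ω. Then for every a ∈ (0,1], with orientation angle θ = π/2, DTV^{a,π/2}(u₂) = p ∫₀^{2π} ( sin²τ + a² b² cos²τ )^{1/2} dτ. -/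
open MeasureTheory Filter
open scoped ENNReal Topology Pointwise

noncomputable section

/-- The closed ellipse `pE^{b,0}` with semi-axes `p` and `pb`. -/
def pEllipse (p b : ℝ) : Set E2 := {x : E2 | (x 0 / p) ^ 2 + (x 1 / (p * b)) ^ 2 ≤ 1}

open Set

section Lemmas
variable {p b : ℝ}

lemma vec2_apply0 (x y : ℝ) : vec2 x y 0 = x := rfl
lemma vec2_apply1 (x y : ℝ) : vec2 x y 1 = y := rfl
lemma vec2_eta (z : E2) : vec2 (z 0) (z 1) = z := by ext i; fin_cases i <;> rfl
lemma single0 : (EuclideanSpace.single (0:Fin 2) (1:ℝ)) = vec2 1 0 := by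
  ext i; fin_cases i <;> simp [vec2, EuclideanSpace.single]
lemma single1 : (EuclideanSpace.single (1:Fin 2) (1:ℝ)) = vec2 0 1 := by
  ext i; fin_cases i <;> simp [vec2, EuclideanSpace.single]
lemma vec2_smul_add (x y : ℝ) : vec2 x y = x • vec2 1 0 + y • vec2 0 1 := by
  ext i; fin_cases i <;> simp [vec2]

lemma hasDerivAt_vec2_fst (y t : ℝ) : HasDerivAt (fun s => vec2 s y) (vec2 1 0) t := by
  have : (fun s => vec2 s y) = fun s => s • vec2 1 0 + y • vec2 0 1 := by
    funext s; exact vec2_smul_add s y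
  rw [this]
  simpa using ((hasDerivAt_id t).smul_const (vec2 1 0)).add_const (y • vec2 0 1)

lemma hasDerivAt_vec2_snd (x t : ℝ) : HasDerivAt (fun s => vec2 x s) (vec2 0 1) t := by
  have : (fun s => vec2 x s) = fun s => s • vec2 0 1 + x • vec2 1 0 := by
    funext s; rw [vec2_smul_add x s]; abel
  rw [this]
  simpa using ((hasDerivAt_id t).smul_const (vec2 0 1)).add_const (x • vec2 1 0)

lemma hasDerivAt_slice0 {f : E2 → ℝ} (hf : Differentiable ℝ f) (y t : ℝ) :
    HasDerivAt (fun s => f (vec2 s y)) (pd 0 f (vec2 t y)) t := by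
  rw [pd, single0]; exact
    ((hf (vec2 t y)).hasFDerivAt).comp_hasDerivAt t (hasDerivAt_vec2_fst y t)

lemma hasDerivAt_slice1 {f : E2 → ℝ} (hf : Differentiable ℝ f) (x t : ℝ) :
    HasDerivAt (fun s => f (vec2 x s)) (pd 1 f (vec2 x t)) t := by
  rw [pd, single1]; exact
    ((hf (vec2 x t)).hasFDerivAt).comp_hasDerivAt t (hasDerivAt_vec2_snd x t)

lemma continuous_pd {f : E2 → ℝ} (hf : ContDiff ℝ 1 f) (i : Fin 2) :
    Continuous (pd i f) :=
  (hf.continuous_fderiv one_ne_zero).clm_apply continuous_const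

lemma continuous_vec2 : Continuous (fun q : ℝ × ℝ => vec2 q.1 q.2) := by
  have : (fun q : ℝ × ℝ => vec2 q.1 q.2)
      = fun q : ℝ × ℝ => q.1 • vec2 1 0 + q.2 • vec2 0 1 := by
    funext q; exact vec2_smul_add q.1 q.2
  rw [this]; fun_prop

def e2equiv : (ℝ × ℝ) ≃ᵐ E2 :=
  (MeasurableEquiv.finTwoArrow.symm).trans (MeasurableEquiv.toLp 2 (Fin 2 → ℝ))

lemma e2mp : MeasurePreserving (e2equiv) volume volume :=
  ((EuclideanSpace.volume_preserving_symm_measurableEquiv_toLp (Fin 2)).symm).comp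
    ((volume_preserving_finTwoArrow ℝ).symm _)

lemma integral_vec2 (F : E2 → ℝ) :
    ∫ x, F x = ∫ q : ℝ × ℝ, F (vec2 q.1 q.2) := (e2mp.integral_comp' F).symm

/-- half-width of the horizontal slice at height t -/
def wA (p b t : ℝ) : ℝ := p * Real.sqrt (1 - (t / (p * b)) ^ 2)

lemma wA_nonneg (hp : 0 < p) (t : ℝ) : 0 ≤ wA p b t :=
  mul_nonneg hp.le (Real.sqrt_nonneg _)

lemma continuous_wA : Continuous (wA p b) := by unfold wA; fun_prop

lemma sliceSetA (hp : 0 < p) (hb : 0 < b) {y : ℝ} (hy : |y| ≤ p * b) :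
    {x : ℝ | (x / p) ^ 2 + (y / (p * b)) ^ 2 ≤ 1} = Icc (-(wA p b y)) (wA p b y) := by
  have hpb : 0 < p * b := mul_pos hp hb
  have hm : 0 ≤ 1 - (y / (p * b)) ^ 2 := by
    have h2 : y ^ 2 ≤ (p * b) ^ 2 := by nlinarith [abs_nonneg y, sq_abs y]
    have : (y / (p * b)) ^ 2 ≤ 1 := by
      rw [div_pow, div_le_one (by positivity)]; exact h2
    linarith
  have hw2 : wA p b y ^ 2 = p ^ 2 * (1 - (y / (p * b)) ^ 2) := by
    rw [wA, mul_pow, Real.sq_sqrt hm]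
  have hwnn := wA_nonneg (b := b) hp y
  ext x
  simp only [mem_setOf_eq, mem_Icc]
  constructor
  · intro h
    have hx2 : x ^ 2 ≤ wA p b y ^ 2 := by
      rw [hw2]
      have : (x / p) ^ 2 ≤ 1 - (y / (p * b)) ^ 2 := by linarith
      rw [div_pow, div_le_iff₀ (by positivity)] at this
      linarith
    constructor <;> nlinarith [sq_nonneg (x + wA p b y), sq_nonneg (x - wA p b y)]
  · rintro ⟨h1, h2⟩
    have hx2 : x ^ 2 ≤ wA p b y ^ 2 := by nlinarith
    rw [hw2] at hx2
    have : (x / p) ^ 2 ≤ 1 - (y / (p * b)) ^ 2 := by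
      rw [div_pow, div_le_iff₀ (by positivity)]; nlinarith
    linarith

def Sprime (p b : ℝ) : Set (ℝ × ℝ) := {q | (q.1 / p) ^ 2 + (q.2 / (p * b)) ^ 2 ≤ 1}

lemma Sprime_closed : IsClosed (Sprime p b) :=
  isClosed_le (by fun_prop) continuous_const

lemma Sprime_compact (hp : 0 < p) (hb : 0 < b) : IsCompact (Sprime p b) := by
  rw [Metric.isCompact_iff_isClosed_bounded]
  refine ⟨Sprime_closed, ?_⟩
  rw [Metric.isBounded_iff_subset_closedBall 0]
  refine ⟨max p (p * b), fun q hq => ?_⟩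
  have h1 : q.1 ^ 2 ≤ p ^ 2 := by
    have h0 : (0:ℝ) ≤ (q.2 / (p * b)) ^ 2 := sq_nonneg _
    have := hq.out
    rw [div_pow] at this
    have hle : q.1 ^ 2 / p ^ 2 ≤ 1 := by linarith
    rw [div_le_one (by positivity)] at hle; exact hle
  have h2 : q.2 ^ 2 ≤ (p * b) ^ 2 := by
    have h0 : (0:ℝ) ≤ (q.1 / p) ^ 2 := sq_nonneg _
    have := hq.out
    rw [div_pow (q.2)] at this
    have hle : q.2 ^ 2 / (p * b) ^ 2 ≤ 1 := by linarith
    rw [div_le_one (by positivity)] at hle; exact hle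
  have ha1 : |q.1| ≤ p := by nlinarith [abs_nonneg q.1, sq_abs q.1]
  have ha2 : |q.2| ≤ p * b := by nlinarith [abs_nonneg q.2, sq_abs q.2, mul_pos hp hb]
  simp only [Metric.mem_closedBall, dist_zero_right, Prod.norm_def, Real.norm_eq_abs]
  exact max_le_max ha1 ha2

lemma pEllipse_measurable : MeasurableSet (pEllipse p b) := by
  have : IsClosed (pEllipse p b) := by
    have hc : Continuous fun x : E2 => (x 0 / p) ^ 2 + (x 1 / (p * b)) ^ 2 := by
      have h0 : Continuous fun x : E2 => x 0 := PiLp.continuous_apply 2 _ (0 : Fin 2)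
      have h1 : Continuous fun x : E2 => x 1 := PiLp.continuous_apply 2 _ (1 : Fin 2)
      fun_prop
    exact isClosed_le hc continuous_const
  exact this.measurableSet
end Lemmas
section Slice
variable {p b : ℝ}

lemma continuous_coord0 : Continuous fun x : E2 => x 0 := PiLp.continuous_apply 2 _ (0 : Fin 2)
lemma continuous_coord1 : Continuous fun x : E2 => x 1 := PiLp.continuous_apply 2 _ (1 : Fin 2)

lemma sliceA (hp : 0 < p) (hb : 0 < b) (f : E2 → ℝ) (hf : ContDiff ℝ 1 f) :
    ∫ x in pEllipse p b, pd 0 f x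
      = ∫ t in (-(p*b))..(p*b), (f (vec2 (wA p b t) t) - f (vec2 (-(wA p b t)) t)) := by
  have hpb : 0 < p * b := mul_pos hp hb
  set g : ℝ × ℝ → ℝ := fun q => pd 0 f (vec2 q.1 q.2) with hg_def
  have hg : Continuous g := (continuous_pd hf 0).comp continuous_vec2
  have hInt : Integrable ((Sprime p b).indicator g) volume :=
    (integrable_indicator_iff Sprime_closed.measurableSet).2
      (hg.continuousOn.integrableOn_compact (Sprime_compact hp hb))
  have step1 : ∫ x in pEllipse p b, pd 0 f x
      = ∫ q : ℝ × ℝ, (Sprime p b).indicator g q := by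
    rw [← integral_indicator pEllipse_measurable, integral_vec2]
    rfl
  rw [step1]
  rw [show (volume : Measure (ℝ × ℝ)) = volume.prod volume from
    MeasureTheory.Measure.volume_eq_prod ℝ ℝ]
  rw [integral_prod_symm _ (by exact hInt)]
  have step2 : (fun y => ∫ x, (Sprime p b).indicator g (x, y))
      = (Icc (-(p*b)) (p*b)).indicator
          (fun y => f (vec2 (wA p b y) y) - f (vec2 (-(wA p b y)) y)) := by
    funext y
    by_cases hy : |y| ≤ p * b
    · have hslice : (fun x : ℝ => (Sprime p b).indicator g (x, y))
          = (Icc (-(wA p b y)) (wA p b y)).indicator (fun x => pd 0 f (vec2 x y)) := by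
        funext x
        have hmem : ((x, y) ∈ Sprime p b) ↔ x ∈ Icc (-(wA p b y)) (wA p b y) := by
          rw [← sliceSetA hp hb hy]; rfl
        by_cases h : x ∈ Icc (-(wA p b y)) (wA p b y)
        · rw [Set.indicator_of_mem (hmem.2 h), Set.indicator_of_mem h]
        · rw [Set.indicator_of_notMem (fun hc => h (hmem.1 hc)),
            Set.indicator_of_notMem h]
      rw [hslice, integral_indicator measurableSet_Icc,
        integral_Icc_eq_integral_Ioc,
        ← intervalIntegral.integral_of_le (by linarith [wA_nonneg (b := b) hp y])]
      rw [intervalIntegral.integral_eq_sub_of_hasDerivAt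
        (fun t _ => hasDerivAt_slice0 (hf.differentiable one_ne_zero) y t)
        (((continuous_pd hf 0).comp
          (continuous_vec2.comp (by fun_prop : Continuous fun t : ℝ => (t, y)))).intervalIntegrable _ _)]
      rw [Set.indicator_of_mem (by simpa [Set.mem_Icc] using abs_le.1 hy)]
    · have hz : (fun x : ℝ => (Sprime p b).indicator g (x, y)) = fun _ => (0:ℝ) := by
        funext x
        refine Set.indicator_of_notMem (fun hc => hy ?_) _
        have h := hc.out
        have h0 : (0:ℝ) ≤ (x / p) ^ 2 := sq_nonneg _
        have hle : (y / (p*b)) ^ 2 ≤ 1 := by linarith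
        rw [div_pow, div_le_one (by positivity)] at hle
        nlinarith [abs_nonneg y, sq_abs y]
      have hyIcc : y ∉ Icc (-(p*b)) (p*b) := by
        simp only [Set.mem_Icc, not_and_or, not_le]
        rcases lt_abs.1 (not_le.1 hy) with h | h
        · exact Or.inr h
        · exact Or.inl (by linarith)
      rw [hz, Set.indicator_of_notMem hyIcc]
      simp
  rw [step2, integral_indicator measurableSet_Icc, integral_Icc_eq_integral_Ioc,
    ← intervalIntegral.integral_of_le (by linarith)]
end Slice
section SliceB
variable {p b : ℝ}

def wB (p b t : ℝ) : ℝ := p * b * Real.sqrt (1 - (t / p) ^ 2)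

lemma wB_nonneg (hp : 0 < p) (hb : 0 < b) (t : ℝ) : 0 ≤ wB p b t :=
  mul_nonneg (by positivity) (Real.sqrt_nonneg _)

lemma continuous_wB : Continuous (wB p b) := by unfold wB; fun_prop

lemma sliceSetB (hp : 0 < p) (hb : 0 < b) {x : ℝ} (hx : |x| ≤ p) :
    {y : ℝ | (x / p) ^ 2 + (y / (p * b)) ^ 2 ≤ 1} = Icc (-(wB p b x)) (wB p b x) := by
  have hpb : 0 < p * b := mul_pos hp hb
  have hm : 0 ≤ 1 - (x / p) ^ 2 := by
    have h2 : x ^ 2 ≤ p ^ 2 := by nlinarith [abs_nonneg x, sq_abs x]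
    have : (x / p) ^ 2 ≤ 1 := by rw [div_pow, div_le_one (by positivity)]; exact h2
    linarith
  have hw2 : wB p b x ^ 2 = (p * b) ^ 2 * (1 - (x / p) ^ 2) := by
    rw [wB, mul_pow, Real.sq_sqrt hm]
  have hwnn := wB_nonneg (b := b) hp hb x
  ext y
  simp only [mem_setOf_eq, mem_Icc]
  constructor
  · intro h
    have hy2 : y ^ 2 ≤ wB p b x ^ 2 := by
      rw [hw2]
      have : (y / (p * b)) ^ 2 ≤ 1 - (x / p) ^ 2 := by linarith
      rw [div_pow, div_le_iff₀ (by positivity)] at this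
      linarith
    constructor <;> nlinarith [sq_nonneg (y + wB p b x), sq_nonneg (y - wB p b x)]
  · rintro ⟨h1, h2⟩
    have hy2 : y ^ 2 ≤ wB p b x ^ 2 := by nlinarith
    rw [hw2] at hy2
    have : (y / (p * b)) ^ 2 ≤ 1 - (x / p) ^ 2 := by
      rw [div_pow, div_le_iff₀ (by positivity)]; nlinarith
    linarith

lemma sliceB (hp : 0 < p) (hb : 0 < b) (f : E2 → ℝ) (hf : ContDiff ℝ 1 f) :
    ∫ x in pEllipse p b, pd 1 f x
      = ∫ t in (-p)..p, (f (vec2 t (wB p b t)) - f (vec2 t (-(wB p b t)))) := by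
  have hpb : 0 < p * b := mul_pos hp hb
  set g : ℝ × ℝ → ℝ := fun q => pd 1 f (vec2 q.1 q.2) with hg_def
  have hg : Continuous g := (continuous_pd hf 1).comp continuous_vec2
  have hInt : Integrable ((Sprime p b).indicator g) volume :=
    (integrable_indicator_iff Sprime_closed.measurableSet).2
      (hg.continuousOn.integrableOn_compact (Sprime_compact hp hb))
  have step1 : ∫ x in pEllipse p b, pd 1 f x
      = ∫ q : ℝ × ℝ, (Sprime p b).indicator g q := by
    rw [← integral_indicator pEllipse_measurable, integral_vec2]
    rfl
  rw [step1]
  rw [show (volume : Measure (ℝ × ℝ)) = volume.prod volume from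
    MeasureTheory.Measure.volume_eq_prod ℝ ℝ]
  rw [integral_prod _ (by exact hInt)]
  have step2 : (fun x => ∫ y, (Sprime p b).indicator g (x, y))
      = (Icc (-p) p).indicator
          (fun x => f (vec2 x (wB p b x)) - f (vec2 x (-(wB p b x)))) := by
    funext x
    by_cases hx : |x| ≤ p
    · have hslice : (fun y : ℝ => (Sprime p b).indicator g (x, y))
          = (Icc (-(wB p b x)) (wB p b x)).indicator (fun y => pd 1 f (vec2 x y)) := by
        funext y
        have hmem : ((x, y) ∈ Sprime p b) ↔ y ∈ Icc (-(wB p b x)) (wB p b x) := by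
          rw [← sliceSetB hp hb hx]; rfl
        by_cases h : y ∈ Icc (-(wB p b x)) (wB p b x)
        · rw [Set.indicator_of_mem (hmem.2 h), Set.indicator_of_mem h]
        · rw [Set.indicator_of_notMem (fun hc => h (hmem.1 hc)),
            Set.indicator_of_notMem h]
      rw [hslice, integral_indicator measurableSet_Icc,
        integral_Icc_eq_integral_Ioc,
        ← intervalIntegral.integral_of_le (by linarith [wB_nonneg (b := b) hp hb x])]
      rw [intervalIntegral.integral_eq_sub_of_hasDerivAt
        (fun t _ => hasDerivAt_slice1 (hf.differentiable one_ne_zero) x t)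
        (((continuous_pd hf 1).comp
          (continuous_vec2.comp (by fun_prop : Continuous fun t : ℝ => (x, t)))).intervalIntegrable _ _)]
      rw [Set.indicator_of_mem (by simpa [Set.mem_Icc] using abs_le.1 hx)]
    · have hz : (fun y : ℝ => (Sprime p b).indicator g (x, y)) = fun _ => (0:ℝ) := by
        funext y
        refine Set.indicator_of_notMem (fun hc => hx ?_) _
        have h := hc.out
        have h0 : (0:ℝ) ≤ (y / (p * b)) ^ 2 := sq_nonneg _
        have hle : (x / p) ^ 2 ≤ 1 := by linarith
        rw [div_pow, div_le_one (by positivity)] at hle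
        nlinarith [abs_nonneg x, sq_abs x]
      have hxIcc : x ∉ Icc (-p) p := by
        simp only [Set.mem_Icc, not_and_or, not_le]
        rcases lt_abs.1 (not_le.1 hx) with h | h
        · exact Or.inr h
        · exact Or.inl (by linarith)
      rw [hz, Set.indicator_of_notMem hxIcc]
      simp
  rw [step2, integral_indicator measurableSet_Icc, integral_Icc_eq_integral_Ioc,
    ← intervalIntegral.integral_of_le (by linarith)]
end SliceB
section Subst
variable {p b : ℝ}
open Real intervalIntegral

/-- boundary parametrisation of the ellipse -/
def bdry (p b τ : ℝ) : E2 := vec2 (p * Real.cos τ) (p * b * Real.sin τ)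

lemma continuous_bdry : Continuous (bdry p b) := by
  unfold bdry
  exact continuous_vec2.comp
    (((continuous_const.mul Real.continuous_cos).prodMk
      (continuous_const.mul Real.continuous_sin)) :
      Continuous fun τ => ((p * Real.cos τ, p * b * Real.sin τ) : ℝ × ℝ))

lemma wA_eval (hp : 0 < p) (hb : 0 < b) {τ : ℝ} (hc : 0 ≤ Real.cos τ) :
    wA p b (p * b * Real.sin τ) = p * Real.cos τ := by
  have hpb : p * b ≠ 0 := by positivity
  rw [wA, mul_div_cancel_left₀ _ hpb]
  rw [show 1 - Real.sin τ ^ 2 = Real.cos τ ^ 2 by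
    have := Real.sin_sq_add_cos_sq τ; linarith]
  rw [Real.sqrt_sq hc]

lemma subA (hp : 0 < p) (hb : 0 < b) (f : E2 → ℝ) (hf : Continuous f) :
    ∫ t in (-(p*b))..(p*b), (f (vec2 (wA p b t) t) - f (vec2 (-(wA p b t)) t))
      = ∫ τ in (0:ℝ)..(2*Real.pi), f (bdry p b τ) * (p * b * Real.cos τ) := by
  have hpb : 0 < p * b := mul_pos hp hb
  set F : ℝ → ℝ := fun τ => f (bdry p b τ) * (p * b * Real.cos τ) with hF
  have hFc : Continuous F := by
    exact (hf.comp continuous_bdry).mul (by fun_prop)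
  have hper : Function.Periodic F (2 * Real.pi) := by
    intro τ; simp only [hF, bdry, Real.cos_add_two_pi, Real.sin_add_two_pi]
  have hshift : ∫ τ in (0:ℝ)..(2*Real.pi), F τ
      = ∫ τ in (-(Real.pi/2))..(-(Real.pi/2) + 2*Real.pi), F τ := by
    have := hper.intervalIntegral_add_eq 0 (-(Real.pi/2))
    simpa using this
  set gp : ℝ → ℝ := fun t => f (vec2 (wA p b t) t) with hgp
  set gm : ℝ → ℝ := fun t => f (vec2 (-(wA p b t)) t) with hgm
  have hgpc : Continuous gp := hf.comp (continuous_vec2.comp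
      (((continuous_wA (p := p) (b := b)).prodMk continuous_id) :
        Continuous fun t : ℝ => (wA p b t, t)))
  have hgmc : Continuous gm := hf.comp (continuous_vec2.comp
      ((((continuous_wA (p := p) (b := b)).neg).prodMk continuous_id) :
        Continuous fun t : ℝ => (-(wA p b t), t)))
  have hderiv : ∀ τ : ℝ, HasDerivAt (fun τ => p * b * Real.sin τ)
      (p * b * Real.cos τ) τ := fun τ => (Real.hasDerivAt_sin τ).const_mul (p*b)
  -- piece 1
  have hpiece1 : ∫ τ in (-(Real.pi/2))..(Real.pi/2), F τ
      = ∫ t in (-(p*b))..(p*b), gp t := by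
    have hsub := intervalIntegral.integral_comp_smul_deriv
      (f := fun τ => p * b * Real.sin τ) (f' := fun τ => p * b * Real.cos τ)
      (g := gp) (a := -(Real.pi/2)) (b := Real.pi/2)
      (fun τ _ => hderiv τ) (by fun_prop) hgpc
    rw [intervalIntegral.integral_congr (g := fun τ =>
        (p * b * Real.cos τ) • (gp ∘ fun τ => p * b * Real.sin τ) τ) ?_, hsub]
    · norm_num [Real.sin_pi_div_two]
    · intro τ hτ
      rw [Set.uIcc_of_le (by linarith [Real.pi_pos]), Set.mem_Icc] at hτ
      have hc : 0 ≤ Real.cos τ := Real.cos_nonneg_of_mem_Icc (Set.mem_Icc.2 hτ)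
      simp only [hF, Function.comp_apply, smul_eq_mul, hgp, bdry]
      rw [wA_eval hp hb hc]; ring
  -- piece 2
  have hpiece2 : ∫ τ in (Real.pi/2)..(-(Real.pi/2) + 2*Real.pi), F τ
      = -∫ t in (-(p*b))..(p*b), gm t := by
    have hsub := intervalIntegral.integral_comp_smul_deriv
      (f := fun τ => p * b * Real.sin τ) (f' := fun τ => p * b * Real.cos τ)
      (g := gm) (a := Real.pi/2) (b := -(Real.pi/2) + 2*Real.pi)
      (fun τ _ => hderiv τ) (by fun_prop) hgmc
    rw [intervalIntegral.integral_congr (g := fun τ =>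
        (p * b * Real.cos τ) • (gm ∘ fun τ => p * b * Real.sin τ) τ) ?_, hsub]
    · norm_num [Real.sin_add_two_pi, Real.sin_neg, Real.sin_pi_div_two]
      rw [intervalIntegral.integral_symm]
    · intro τ hτ
      rw [Set.uIcc_of_le (by linarith [Real.pi_pos]), Set.mem_Icc] at hτ
      have hc : Real.cos τ ≤ 0 :=
        Real.cos_nonpos_of_pi_div_two_le_of_le hτ.1 (by linarith [hτ.2])
      have hwa : wA p b (p * b * Real.sin τ) = -(p * Real.cos τ) := by
        have hpb' : p * b ≠ 0 := by positivity
        rw [wA, mul_div_cancel_left₀ _ hpb']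
        rw [show 1 - Real.sin τ ^ 2 = Real.cos τ ^ 2 by
          have := Real.sin_sq_add_cos_sq τ; linarith]
        rw [show Real.cos τ ^ 2 = (-Real.cos τ)^2 by ring,
          Real.sqrt_sq (by linarith)]
        ring
      simp only [hF, Function.comp_apply, smul_eq_mul, hgm, bdry]
      rw [hwa]
      have : -(-(p * Real.cos τ)) = p * Real.cos τ := by ring
      rw [this]; ring
  have hsplit : ∫ τ in (-(Real.pi/2))..(-(Real.pi/2) + 2*Real.pi), F τ
      = (∫ τ in (-(Real.pi/2))..(Real.pi/2), F τ)
        + ∫ τ in (Real.pi/2)..(-(Real.pi/2) + 2*Real.pi), F τ :=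
    (intervalIntegral.integral_add_adjacent_intervals
      (hFc.intervalIntegrable _ _) (hFc.intervalIntegrable _ _)).symm
  rw [show (∫ t in (-(p*b))..(p*b), (f (vec2 (wA p b t) t) - f (vec2 (-(wA p b t)) t)))
      = (∫ t in (-(p*b))..(p*b), gp t) - ∫ t in (-(p*b))..(p*b), gm t from
    intervalIntegral.integral_sub (hgpc.intervalIntegrable _ _) (hgmc.intervalIntegrable _ _)]
  rw [hshift, hsplit, hpiece1, hpiece2]
  ring
end Subst
section SubstB
variable {p b : ℝ}

lemma wB_eval (hp : 0 < p) (hb : 0 < b) {τ : ℝ} (hs : 0 ≤ Real.sin τ) :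
    wB p b (p * Real.cos τ) = p * b * Real.sin τ := by
  rw [wB, mul_div_cancel_left₀ _ hp.ne']
  rw [show 1 - Real.cos τ ^ 2 = Real.sin τ ^ 2 by
    have := Real.sin_sq_add_cos_sq τ; linarith]
  rw [Real.sqrt_sq hs]

lemma wB_eval_neg (hp : 0 < p) (hb : 0 < b) {τ : ℝ} (hs : Real.sin τ ≤ 0) :
    wB p b (p * Real.cos τ) = -(p * b * Real.sin τ) := by
  rw [wB, mul_div_cancel_left₀ _ hp.ne']
  rw [show 1 - Real.cos τ ^ 2 = Real.sin τ ^ 2 by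
    have := Real.sin_sq_add_cos_sq τ; linarith]
  rw [show Real.sin τ ^ 2 = (-Real.sin τ) ^ 2 by ring, Real.sqrt_sq (by linarith)]
  ring

lemma subB (hp : 0 < p) (hb : 0 < b) (f : E2 → ℝ) (hf : Continuous f) :
    ∫ t in (-p)..p, (f (vec2 t (wB p b t)) - f (vec2 t (-(wB p b t))))
      = ∫ τ in (0:ℝ)..(2*Real.pi), f (bdry p b τ) * (p * Real.sin τ) := by
  have hpb : 0 < p * b := mul_pos hp hb
  set F : ℝ → ℝ := fun τ => f (bdry p b τ) * (p * Real.sin τ) with hF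
  have hFc : Continuous F := (hf.comp continuous_bdry).mul (by fun_prop)
  set gp : ℝ → ℝ := fun t => f (vec2 t (wB p b t)) with hgp
  set gm : ℝ → ℝ := fun t => f (vec2 t (-(wB p b t))) with hgm
  have hgpc : Continuous gp := hf.comp (continuous_vec2.comp
      ((continuous_id.prodMk (continuous_wB (p := p) (b := b))) :
        Continuous fun t : ℝ => (t, wB p b t)))
  have hgmc : Continuous gm := hf.comp (continuous_vec2.comp
      ((continuous_id.prodMk (continuous_wB (p := p) (b := b)).neg) :
        Continuous fun t : ℝ => (t, -(wB p b t))))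
  have hderiv : ∀ τ : ℝ, HasDerivAt (fun τ => p * Real.cos τ)
      (p * -Real.sin τ) τ := fun τ => (Real.hasDerivAt_cos τ).const_mul p
  have hpiece1 : ∫ τ in (0:ℝ)..Real.pi, F τ = ∫ t in (-p)..p, gp t := by
    have hsub := intervalIntegral.integral_comp_smul_deriv
      (f := fun τ => p * Real.cos τ) (f' := fun τ => p * -Real.sin τ)
      (g := gp) (a := (0:ℝ)) (b := Real.pi)
      (fun τ _ => hderiv τ) (by fun_prop) hgpc
    have hcong : ∀ τ ∈ Set.uIcc (0:ℝ) Real.pi,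
        F τ = -((fun τ => p * -Real.sin τ) τ • (gp ∘ fun τ => p * Real.cos τ) τ) := by
      intro τ hτ
      rw [Set.uIcc_of_le Real.pi_pos.le, Set.mem_Icc] at hτ
      have hs : 0 ≤ Real.sin τ := Real.sin_nonneg_of_nonneg_of_le_pi hτ.1 hτ.2
      simp only [hF, Function.comp_apply, smul_eq_mul, hgp, bdry]
      rw [wB_eval hp hb hs]; ring
    rw [intervalIntegral.integral_congr hcong, intervalIntegral.integral_neg, hsub]
    norm_num [Real.cos_pi]
    rw [intervalIntegral.integral_symm, neg_neg]
  have hpiece2 : ∫ τ in Real.pi..(2*Real.pi), F τ = -∫ t in (-p)..p, gm t := by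
    have hsub := intervalIntegral.integral_comp_smul_deriv
      (f := fun τ => p * Real.cos τ) (f' := fun τ => p * -Real.sin τ)
      (g := gm) (a := Real.pi) (b := 2*Real.pi)
      (fun τ _ => hderiv τ) (by fun_prop) hgmc
    have hcong : ∀ τ ∈ Set.uIcc Real.pi (2*Real.pi),
        F τ = -((fun τ => p * -Real.sin τ) τ • (gm ∘ fun τ => p * Real.cos τ) τ) := by
      intro τ hτ
      rw [Set.uIcc_of_le (by linarith [Real.pi_pos]), Set.mem_Icc] at hτ
      have hs : Real.sin τ ≤ 0 := by
        have h1 : 0 ≤ Real.sin (τ - Real.pi) :=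
          Real.sin_nonneg_of_nonneg_of_le_pi (by linarith [hτ.1]) (by linarith [hτ.2])
        rw [Real.sin_sub_pi] at h1; linarith
      simp only [hF, Function.comp_apply, smul_eq_mul, hgm, bdry]
      rw [show p * b * Real.sin τ = -(-(p * b * Real.sin τ)) by ring,
        ← wB_eval_neg hp hb hs]
      ring
    rw [intervalIntegral.integral_congr hcong, intervalIntegral.integral_neg, hsub]
    norm_num [Real.cos_pi]
  have hsplit : ∫ τ in (0:ℝ)..(2*Real.pi), F τ
      = (∫ τ in (0:ℝ)..Real.pi, F τ) + ∫ τ in Real.pi..(2*Real.pi), F τ :=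
    (intervalIntegral.integral_add_adjacent_intervals
      (hFc.intervalIntegrable _ _) (hFc.intervalIntegrable _ _)).symm
  rw [show (∫ t in (-p)..p, (f (vec2 t (wB p b t)) - f (vec2 t (-(wB p b t)))))
      = (∫ t in (-p)..p, gp t) - ∫ t in (-p)..p, gm t from
    intervalIntegral.integral_sub (hgpc.intervalIntegrable _ _) (hgmc.intervalIntegrable _ _)]
  rw [hsplit, hpiece1, hpiece2]
  ring
end SubstB
section Green
variable {p b : ℝ}

lemma pEllipse_eq_image :
    pEllipse p b = (fun q : ℝ × ℝ => vec2 q.1 q.2) '' Sprime p b := by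
  ext x
  constructor
  · intro hx
    exact ⟨(x 0, x 1), hx, vec2_eta x⟩
  · rintro ⟨q, hq, rfl⟩
    exact hq

lemma pEllipse_compact (hp : 0 < p) (hb : 0 < b) : IsCompact (pEllipse p b) := by
  rw [pEllipse_eq_image]
  exact (Sprime_compact hp hb).image continuous_vec2

lemma green (hp : 0 < p) (hb : 0 < b) (v : E2 → E2) (hv : ContDiff ℝ 1 v) :
    ∫ x in pEllipse p b, divVec v x
      = ∫ τ in (0:ℝ)..(2*Real.pi),
          (v (bdry p b τ) 0 * (p * b * Real.cos τ) + v (bdry p b τ) 1 * (p * Real.sin τ)) := by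
  have hf0 : ContDiff ℝ 1 (fun y => v y 0) := contDiff_euclidean.1 hv 0
  have hf1 : ContDiff ℝ 1 (fun y => v y 1) := contDiff_euclidean.1 hv 1
  have hK := pEllipse_compact (p := p) (b := b) hp hb
  have hi0 : IntegrableOn (pd 0 fun y => v y 0) (pEllipse p b) volume :=
    ((continuous_pd hf0 0).continuousOn).integrableOn_compact hK
  have hi1 : IntegrableOn (pd 1 fun y => v y 1) (pEllipse p b) volume :=
    ((continuous_pd hf1 1).continuousOn).integrableOn_compact hK
  have hstep : ∫ x in pEllipse p b, divVec v x
      = (∫ x in pEllipse p b, pd 0 (fun y => v y 0) x)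
        + ∫ x in pEllipse p b, pd 1 (fun y => v y 1) x := by
    unfold divVec
    exact integral_add hi0 hi1
  rw [hstep, sliceA hp hb _ hf0, sliceB hp hb _ hf1,
    subA hp hb _ hf0.continuous, subB hp hb _ hf1.continuous]
  have hc0 : Continuous fun τ => (fun y => v y 0) (bdry p b τ) * (p * b * Real.cos τ) := by
    exact ((continuous_coord0.comp (hv.continuous.comp continuous_bdry)).mul (by fun_prop))
  have hc1 : Continuous fun τ => (fun y => v y 1) (bdry p b τ) * (p * Real.sin τ) := by
    exact ((continuous_coord1.comp (hv.continuous.comp continuous_bdry)).mul (by fun_prop))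
  exact (intervalIntegral.integral_add (hc0.intervalIntegrable _ _)
    (hc1.intervalIntegrable _ _)).symm
end Green
section Upper
variable {a b p : ℝ}

lemma mem_ellip_iff (ha : 0 < a) (x : E2) :
    x ∈ Ellip a (Real.pi/2) ↔ (x 1)^2 + (x 0 / a)^2 ≤ 1 := by
  unfold Ellip
  rw [Set.mem_setOf_eq, Real.cos_pi_div_two, Real.sin_pi_div_two,
    show (x 0 * 0 + x 1 * 1)^2 + ((-x 0 * 1 + x 1 * 0)/a)^2
      = (x 1)^2 + (x 0/a)^2 from by ring]

lemma cs_bound {A B C D : ℝ} (h : A^2 + B^2 ≤ 1) :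
    A*C + B*D ≤ Real.sqrt (C^2 + D^2) := by
  set r := Real.sqrt (C^2 + D^2) with hr
  have hrnn : 0 ≤ r := Real.sqrt_nonneg _
  have hr2 : r^2 = C^2 + D^2 := Real.sq_sqrt (by positivity)
  rcases eq_or_lt_of_le hrnn with h0 | h0
  · have hC : C = 0 := by nlinarith
    have hD : D = 0 := by nlinarith
    simp [hC, hD, ← h0]
  · nlinarith [sq_nonneg (A*r - C), sq_nonneg (B*r - D)]

lemma bdry_bound (ha : 0 < a) (hb : 0 < b) (hp : 0 < p) {τ : ℝ} {z : E2}
    (hz : z ∈ Ellip a (Real.pi/2)) :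
    z 0 * (p * b * Real.cos τ) + z 1 * (p * Real.sin τ)
      ≤ p * Real.sqrt (Real.sin τ ^ 2 + a^2 * b^2 * Real.cos τ ^ 2) := by
  rw [mem_ellip_iff ha] at hz
  have h := cs_bound (C := p * Real.sin τ) (D := a * (p * b * Real.cos τ)) hz
  have he : z 1 * (p * Real.sin τ) + z 0 / a * (a * (p * b * Real.cos τ))
      = z 0 * (p * b * Real.cos τ) + z 1 * (p * Real.sin τ) := by
    field_simp
    ring
  rw [he] at h
  refine h.trans (le_of_eq ?_)
  rw [show (p * Real.sin τ)^2 + (a * (p * b * Real.cos τ))^2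
      = p^2 * (Real.sin τ ^ 2 + a^2 * b^2 * Real.cos τ ^ 2) by ring]
  rw [Real.sqrt_mul (sq_nonneg p), Real.sqrt_sq hp.le]

lemma bdry_mem_pEllipse (hb : 0 < b) (hp : 0 < p) (τ : ℝ) :
    bdry p b τ ∈ pEllipse p b := by
  show (bdry p b τ 0 / p)^2 + (bdry p b τ 1 / (p*b))^2 ≤ 1
  unfold bdry
  rw [vec2_apply0, vec2_apply1, mul_div_cancel_left₀ _ hp.ne',
    mul_div_cancel_left₀ _ (by positivity : (p*b) ≠ 0)]
  rw [Real.cos_sq_add_sin_sq]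

lemma integral_indicator_mul (Ω : Set E2) (hsub : pEllipse p b ⊆ Ω) (F : E2 → ℝ) :
    ∫ x in Ω, ((pEllipse p b).indicator (fun _ => (1:ℝ)) x) * F x
      = ∫ x in pEllipse p b, F x := by
  have h : (fun x => ((pEllipse p b).indicator (fun _ => (1:ℝ)) x) * F x)
      = (pEllipse p b).indicator F := by
    funext x
    by_cases hx : x ∈ pEllipse p b <;>
      simp [Set.indicator_apply, hx]
  rw [h, setIntegral_indicator pEllipse_measurable,
    Set.inter_eq_self_of_subset_right hsub]
end Upper
section Cutoff
open scoped Manifold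
variable {a b p : ℝ}

lemma contDiff_coord0 {n : ℕ∞} : ContDiff ℝ n fun x : E2 => x 0 :=
  (PiLp.proj (𝕜 := ℝ) 2 (fun _ : Fin 2 => ℝ) 0).contDiff
lemma contDiff_coord1 {n : ℕ∞} : ContDiff ℝ n fun x : E2 => x 1 :=
  (PiLp.proj (𝕜 := ℝ) 2 (fun _ : Fin 2 => ℝ) 1).contDiff

/-- The boundary curve set. -/
def Kbd (p b : ℝ) : Set E2 := {x : E2 | (x 0 / p) ^ 2 + (x 1 / (p * b)) ^ 2 = 1}

lemma Kbd_closed : IsClosed (Kbd p b) :=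
  isClosed_eq (by fun_prop (disch := aesop)) continuous_const

lemma Kbd_subset : Kbd p b ⊆ pEllipse p b := fun x hx => le_of_eq hx

lemma bdry_mem_Kbd (hb : 0 < b) (hp : 0 < p) (τ : ℝ) : bdry p b τ ∈ Kbd p b := by
  show (bdry p b τ 0 / p)^2 + (bdry p b τ 1 / (p*b))^2 = 1
  unfold bdry
  rw [vec2_apply0, vec2_apply1, mul_div_cancel_left₀ _ hp.ne',
    mul_div_cancel_left₀ _ (by positivity : (p*b) ≠ 0)]
  rw [Real.cos_sq_add_sin_sq]

lemma zero_not_mem_Kbd : (0 : E2) ∉ Kbd p b := by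
  intro h
  have h0 : (0 : E2) 0 = 0 := rfl
  have h1 : (0 : E2) 1 = 0 := rfl
  have := h.out
  rw [h0, h1] at this
  norm_num at this

lemma exists_cutoff (Ω : Set E2) (hΩo : IsOpen Ω) (hp : 0 < p) (hb : 0 < b)
    (hsub : pEllipse p b ⊆ Ω) :
    ∃ η : E2 → ℝ, ContDiff ℝ 1 η ∧ HasCompactSupport η ∧ tsupport η ⊆ Ω ∧
      (∀ x, η x ∈ Set.Icc (0:ℝ) 1) ∧ (∀ x ∈ Kbd p b, η x = 1) ∧
      (0 : E2) ∉ tsupport η := by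
  have hKc : IsCompact (Kbd p b) :=
    (pEllipse_compact hp hb).of_isClosed_subset Kbd_closed Kbd_subset
  have hUo : IsOpen (Ω \ {0}) := hΩo.sdiff isClosed_singleton
  have hKU : Kbd p b ⊆ Ω \ {0} := fun x hx =>
    ⟨hsub (Kbd_subset hx), by simp; rintro rfl; exact zero_not_mem_Kbd hx⟩
  obtain ⟨L, hLc, hKL, hLU⟩ := exists_compact_between hKc hUo hKU
  obtain ⟨f, hf0, hf1, hf01⟩ := exists_contMDiffMap_zero_one_of_isClosed 𝓘(ℝ, E2) (n := ⊤)
    (isOpen_interior.isClosed_compl) Kbd_closed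
    (by
      rw [Set.disjoint_left]
      intro x hx hxK
      exact hx (hKL hxK))
  have hηc : ContDiff ℝ 1 (f : E2 → ℝ) := (contMDiff_iff_contDiff.1 f.contMDiff).of_le (by exact_mod_cast le_top)
  have hsupp : tsupport (f : E2 → ℝ) ⊆ L := by
    have h1 : Function.support (f : E2 → ℝ) ⊆ interior L := by
      intro x hx
      by_contra hxi
      exact hx (hf0 hxi)
    calc tsupport (f : E2 → ℝ) ⊆ closure (interior L) := closure_mono h1
      _ ⊆ L := closure_minimal interior_subset hLc.isClosed
  refine ⟨f, hηc, ?_, ?_, hf01, fun x hx => hf1 hx, ?_⟩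
  · exact HasCompactSupport.of_support_subset_isCompact hLc
      (subset_trans (Function.support_subset_iff'.2 (fun x hx => hf0 (fun hi => hx (interior_subset hi)))) (fun x hx => hx))
  · exact hsupp.trans (hLU.trans Set.diff_subset)
  · intro h0
    exact (hLU (hsupp h0)).2 rfl
section Witness
variable {a b p : ℝ}

lemma vec2_zero : vec2 0 0 = (0 : E2) := by
  ext i; fin_cases i <;> simp [vec2]

def q2f (a b : ℝ) (x : E2) : ℝ := a^2*b^2*(x 0)^2 + (x 1)^2/b^2

def wit (a b : ℝ) (η : E2 → ℝ) (x : E2) : E2 :=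
  vec2 (η x * (a^2*b*(x 0) * (Real.sqrt (q2f a b x))⁻¹))
       (η x * ((x 1)/b * (Real.sqrt (q2f a b x))⁻¹))

lemma q2f_nonneg (x : E2) : 0 ≤ q2f a b x := by
  unfold q2f; positivity

lemma q2f_coords_zero (ha : 0 < a) (hb : 0 < b) {x : E2} (h : q2f a b x = 0) :
    x 0 = 0 ∧ x 1 = 0 := by
  unfold q2f at h
  have h2 : (0:ℝ) < a^2*b^2 := by positivity
  have hb2 : (0:ℝ) < b^2 := by positivity
  have hA : (0:ℝ) ≤ (x 1)^2/b^2 := by positivity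
  have hB : (0:ℝ) ≤ a^2*b^2*(x 0)^2 := by positivity
  have h00 : (x 0)^2 = 0 := by
    by_contra hc
    have hpos : 0 < (x 0)^2 := lt_of_le_of_ne (sq_nonneg _) (Ne.symm hc)
    nlinarith
  have hzero : (x 1)^2/b^2 = 0 := by nlinarith
  have h11 : (x 1)^2 = 0 := by
    rcases div_eq_zero_iff.1 hzero with h' | h'
    · exact h'
    · exact absurd h' hb2.ne'
  exact ⟨pow_eq_zero_iff (n := 2) (by norm_num) |>.1 h00,
    pow_eq_zero_iff (n := 2) (by norm_num) |>.1 h11⟩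

lemma q2f_pos (ha : 0 < a) (hb : 0 < b) {x : E2} (hx : x ≠ 0) : 0 < q2f a b x := by
  rcases (q2f_nonneg (a := a) (b := b) x).lt_or_eq with h | h
  · exact h
  · exfalso
    obtain ⟨h0, h1⟩ := q2f_coords_zero ha hb h.symm
    exact hx (by rw [← vec2_eta x, h0, h1, vec2_zero])

lemma contDiff_q2f (hb : 0 < b) : ContDiff ℝ 1 (q2f a b) := by
  unfold q2f
  exact (contDiff_const.mul ((contDiff_coord0 (n := 1)).pow 2)).add
    (((contDiff_coord1 (n := 1)).pow 2).div_const _)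

lemma wit_zero_of_eta_zero {η : E2 → ℝ} {x : E2} (hx : η x = 0) :
    wit a b η x = 0 := by
  unfold wit
  rw [hx, zero_mul, zero_mul, vec2_zero]

lemma wit_contDiff (ha : 0 < a) (hb : 0 < b) {η : E2 → ℝ}
    (hη : ContDiff ℝ 1 η) (h0 : (0:E2) ∉ tsupport η) :
    ContDiff ℝ 1 (wit a b η) := by
  rw [contDiff_iff_contDiffAt]
  intro x
  by_cases hx : x ∈ tsupport η
  · have hxne : x ≠ 0 := fun h => h0 (h ▸ hx)
    have hq := q2f_pos ha hb hxne
    have hsqrtpos : 0 < Real.sqrt (q2f a b x) := Real.sqrt_pos.2 hq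
    have hsq : ContDiffAt ℝ 1 (fun y => (Real.sqrt (q2f a b y))⁻¹) x :=
      ((Real.contDiffAt_sqrt hq.ne').comp x (contDiff_q2f hb).contDiffAt).inv hsqrtpos.ne'
    have hA : ContDiffAt ℝ 1
        (fun y => η y * (a^2*b*(y 0) * (Real.sqrt (q2f a b y))⁻¹)) x :=
      hη.contDiffAt.mul ((contDiff_const.mul (contDiff_coord0 (n := 1))).contDiffAt.mul hsq)
    have hB : ContDiffAt ℝ 1
        (fun y => η y * ((y 1)/b * (Real.sqrt (q2f a b y))⁻¹)) x :=
      hη.contDiffAt.mul (((contDiff_coord1 (n := 1)).div_const b).contDiffAt.mul hsq)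
    have hrepr : wit a b η = fun y =>
        (η y * (a^2*b*(y 0) * (Real.sqrt (q2f a b y))⁻¹)) • vec2 1 0
        + (η y * ((y 1)/b * (Real.sqrt (q2f a b y))⁻¹)) • vec2 0 1 := by
      funext y; exact vec2_smul_add _ _
    rw [hrepr]
    exact (hA.smul contDiffAt_const).add (hB.smul contDiffAt_const)
  · have hopen : IsOpen (tsupport η)ᶜ := (isClosed_tsupport η).isOpen_compl
    have heq : wit a b η =ᶠ[nhds x] fun _ => (0:E2) := by
      filter_upwards [hopen.mem_nhds hx] with y hy
      exact wit_zero_of_eta_zero (image_eq_zero_of_notMem_tsupport hy)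
    exact (contDiffAt_const (c := (0:E2))).congr_of_eventuallyEq heq

lemma wit_mem_ellip (ha : 0 < a) (hb : 0 < b) {η : E2 → ℝ}
    (hη01 : ∀ x, η x ∈ Set.Icc (0:ℝ) 1) (x : E2) :
    wit a b η x ∈ Ellip a (Real.pi/2) := by
  rw [mem_ellip_iff ha]
  have h0 : wit a b η x 0 = η x * (a^2*b*(x 0) * (Real.sqrt (q2f a b x))⁻¹) := rfl
  have h1 : wit a b η x 1 = η x * ((x 1)/b * (Real.sqrt (q2f a b x))⁻¹) := rfl
  rw [h0, h1]
  rcases eq_or_lt_of_le (q2f_nonneg (a := a) (b := b) x) with hq | hq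
  · obtain ⟨hx0, hx1⟩ := q2f_coords_zero ha hb hq.symm
    rw [hx0, hx1]
    norm_num
  · have hQne : q2f a b x ≠ 0 := hq.ne'
    have hsq : Real.sqrt (q2f a b x) ^ 2 = q2f a b x := Real.sq_sqrt hq.le
    have key : (η x * ((x 1)/b * (Real.sqrt (q2f a b x))⁻¹))^2
        + ((η x * (a^2*b*(x 0) * (Real.sqrt (q2f a b x))⁻¹))/a)^2
        = (η x)^2 := by
      have e1 : (η x * ((x 1)/b * (Real.sqrt (q2f a b x))⁻¹))^2
          + ((η x * (a^2*b*(x 0) * (Real.sqrt (q2f a b x))⁻¹))/a)^2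
          = (η x)^2 * (((x 1)/b)^2 + (a^2*b*(x 0)/a)^2) * ((Real.sqrt (q2f a b x))⁻¹)^2 := by
        ring
      have e2 : ((x 1)/b)^2 + (a^2*b*(x 0)/a)^2 = q2f a b x := by
        unfold q2f
        field_simp
        ring
      rw [e1, e2, inv_pow, hsq, mul_assoc, mul_inv_cancel₀ hQne, mul_one]
    rw [key]
    have h01 := hη01 x
    nlinarith [h01.1, h01.2]

lemma sinsq_pos (ha : 0 < a) (hb : 0 < b) (τ : ℝ) :
    0 < Real.sin τ ^ 2 + a^2*b^2*Real.cos τ ^ 2 := by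
  have h1 : Real.sin τ ^ 2 + Real.cos τ ^ 2 = 1 := Real.sin_sq_add_cos_sq τ
  have h2 : (0:ℝ) < a^2*b^2 := by positivity
  by_cases hc : Real.cos τ = 0
  · rw [hc]; nlinarith
  · have hc2 : 0 < Real.cos τ ^ 2 := by positivity
    nlinarith [sq_nonneg (Real.sin τ), mul_pos h2 hc2]

lemma wit_bdry_val (ha : 0 < a) (hb : 0 < b) (hp : 0 < p) {η : E2 → ℝ}
    (τ : ℝ) (hη1 : η (bdry p b τ) = 1) :
    wit a b η (bdry p b τ) 0 * (p * b * Real.cos τ)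
      + wit a b η (bdry p b τ) 1 * (p * Real.sin τ)
      = p * Real.sqrt (Real.sin τ ^ 2 + a^2*b^2*Real.cos τ ^ 2) := by
  have hS : 0 < Real.sin τ ^ 2 + a^2*b^2*Real.cos τ ^ 2 := sinsq_pos ha hb τ
  have hq2γ : q2f a b (bdry p b τ)
      = p^2 * (Real.sin τ ^ 2 + a^2*b^2*Real.cos τ ^ 2) := by
    show a^2*b^2*(bdry p b τ 0)^2 + (bdry p b τ 1)^2/b^2 = _
    rw [show bdry p b τ 0 = p * Real.cos τ from rfl,
      show bdry p b τ 1 = p * b * Real.sin τ from rfl]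
    field_simp
    ring
  have hsqrt : Real.sqrt (q2f a b (bdry p b τ))
      = p * Real.sqrt (Real.sin τ ^ 2 + a^2*b^2*Real.cos τ ^ 2) := by
    rw [hq2γ, Real.sqrt_mul (sq_nonneg p), Real.sqrt_sq hp.le]
  have h0 : wit a b η (bdry p b τ) 0
      = η (bdry p b τ) * (a^2*b*(bdry p b τ 0) * (Real.sqrt (q2f a b (bdry p b τ)))⁻¹) := rfl
  have h1 : wit a b η (bdry p b τ) 1
      = η (bdry p b τ) * ((bdry p b τ 1)/b * (Real.sqrt (q2f a b (bdry p b τ)))⁻¹) := rfl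
  rw [h0, h1, hη1, hsqrt,
    show bdry p b τ 0 = p * Real.cos τ from rfl,
    show bdry p b τ 1 = p * b * Real.sin τ from rfl]
  have hsne : Real.sqrt (Real.sin τ ^ 2 + a^2*b^2*Real.cos τ ^ 2) ≠ 0 :=
    (Real.sqrt_pos.2 hS).ne'
  have hss : Real.sqrt (Real.sin τ ^ 2 + a^2*b^2*Real.cos τ ^ 2)
      * Real.sqrt (Real.sin τ ^ 2 + a^2*b^2*Real.cos τ ^ 2)
      = Real.sin τ ^ 2 + a^2*b^2*Real.cos τ ^ 2 := Real.mul_self_sqrt hS.le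
  calc 1 * (a^2*b*(p * Real.cos τ) * (p * Real.sqrt (Real.sin τ ^ 2 + a^2*b^2*Real.cos τ ^ 2))⁻¹) * (p * b * Real.cos τ)
      + 1 * ((p * b * Real.sin τ)/b * (p * Real.sqrt (Real.sin τ ^ 2 + a^2*b^2*Real.cos τ ^ 2))⁻¹) * (p * Real.sin τ)
      = (a^2*b*(p * Real.cos τ)*(p * b * Real.cos τ) + ((p * b * Real.sin τ)/b)*(p * Real.sin τ))
          * (p * Real.sqrt (Real.sin τ ^ 2 + a^2*b^2*Real.cos τ ^ 2))⁻¹ := by ring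
    _ = (p^2 * (Real.sin τ ^ 2 + a^2*b^2*Real.cos τ ^ 2))
          * (p * Real.sqrt (Real.sin τ ^ 2 + a^2*b^2*Real.cos τ ^ 2))⁻¹ := by
        rw [show a^2*b*(p * Real.cos τ)*(p * b * Real.cos τ) + ((p * b * Real.sin τ)/b)*(p * Real.sin τ)
            = p^2 * (Real.sin τ ^ 2 + a^2*b^2*Real.cos τ ^ 2) from by field_simp; ring]
    _ = (p^2 * p⁻¹) * ((Real.sin τ ^ 2 + a^2*b^2*Real.cos τ ^ 2)
          * (Real.sqrt (Real.sin τ ^ 2 + a^2*b^2*Real.cos τ ^ 2))⁻¹) := by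
        rw [mul_inv]; ring
    _ = p * ((Real.sin τ ^ 2 + a^2*b^2*Real.cos τ ^ 2)
          / Real.sqrt (Real.sin τ ^ 2 + a^2*b^2*Real.cos τ ^ 2)) := by
        rw [sq, mul_assoc p p p⁻¹, mul_inv_cancel₀ hp.ne', mul_one, ← div_eq_mul_inv]
    _ = p * Real.sqrt (Real.sin τ ^ 2 + a^2*b^2*Real.cos τ ^ 2) := by
        rw [Real.div_sqrt]
end Witness

/-- `DTV^{a,π/2}` of the characteristic function of the ellipse `pE^{b,0}`. -/
theorem dtv_ellipse_theta_pi_div_two (Ω : Set E2) (hΩo : IsOpen Ω)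
    (hΩb : Bornology.IsBounded Ω)
    (a b p : ℝ) (ha : 0 < a) (ha1 : a ≤ 1) (hb : 0 < b) (hb1 : b < 1) (hp : 0 < p)
    (hsub : pEllipse p b ⊆ Ω) :
    DTV Ω a (Real.pi / 2) ((pEllipse p b).indicator fun _ => (1 : ℝ)) =
      ENNReal.ofReal (p * ∫ τ in (0:ℝ)..(2 * Real.pi),
        Real.sqrt (Real.sin τ ^ 2 + a ^ 2 * b ^ 2 * Real.cos τ ^ 2)) := by
  have h2pi : (0:ℝ) ≤ 2 * Real.pi := by linarith [Real.pi_pos]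
  have hPeq : p * (∫ τ in (0:ℝ)..(2 * Real.pi),
        Real.sqrt (Real.sin τ ^ 2 + a ^ 2 * b ^ 2 * Real.cos τ ^ 2))
      = ∫ τ in (0:ℝ)..(2 * Real.pi),
        p * Real.sqrt (Real.sin τ ^ 2 + a ^ 2 * b ^ 2 * Real.cos τ ^ 2) :=
    (intervalIntegral.integral_const_mul _ _).symm
  rw [hPeq]
  have hRHScont : Continuous fun τ : ℝ =>
      p * Real.sqrt (Real.sin τ ^ 2 + a ^ 2 * b ^ 2 * Real.cos τ ^ 2) := by
    apply continuous_const.mul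
    exact Real.continuous_sqrt.comp (by fun_prop)
  -- upper bound
  apply le_antisymm
  · refine iSup₂_le ?_
    rintro v ⟨⟨hv1, hv2, hv3⟩, hvE⟩
    apply ENNReal.ofReal_le_ofReal
    rw [integral_indicator_mul Ω hsub (divVec v), green hp hb v hv1]
    have hc0 : Continuous fun τ => v (bdry p b τ) 0 * (p * b * Real.cos τ) :=
      (continuous_coord0.comp (hv1.continuous.comp continuous_bdry)).mul (by fun_prop)
    have hc1 : Continuous fun τ => v (bdry p b τ) 1 * (p * Real.sin τ) :=
      (continuous_coord1.comp (hv1.continuous.comp continuous_bdry)).mul (by fun_prop)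
    apply intervalIntegral.integral_mono_on h2pi
      ((hc0.add hc1).intervalIntegrable _ _) (hRHScont.intervalIntegrable _ _)
    intro τ _
    exact bdry_bound ha hb hp (hvE _ (hsub (bdry_mem_pEllipse hb hp τ)))
  -- lower bound
  · obtain ⟨η, hη1, hη2, hη3, hη01, hηK, hη0⟩ := exists_cutoff Ω hΩo hp hb hsub
    set v₀ := wit a b η with hv₀
    have hv₀cd : ContDiff ℝ 1 v₀ := wit_contDiff ha hb hη1 hη0
    have hsupp : Function.support v₀ ⊆ tsupport η := by
      intro x hx
      by_contra hc
      exact hx (wit_zero_of_eta_zero (image_eq_zero_of_notMem_tsupport hc))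
    have hv₀cs : HasCompactSupport v₀ :=
      HasCompactSupport.of_support_subset_isCompact hη2 hsupp
    have hts : tsupport v₀ ⊆ Ω :=
      (closure_minimal hsupp (isClosed_tsupport η)).trans hη3
    have hmem : v₀ ∈ {v : E2 → E2 | Cc1 Ω v ∧ ∀ x ∈ Ω, v x ∈ Ellip a (Real.pi/2)} :=
      ⟨⟨hv₀cd, hv₀cs, hts⟩, fun x _ => wit_mem_ellip ha hb hη01 x⟩
    have hval : ∫ x in Ω, ((pEllipse p b).indicator fun _ => (1:ℝ)) x * divVec v₀ x
        = ∫ τ in (0:ℝ)..(2 * Real.pi),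
            p * Real.sqrt (Real.sin τ ^ 2 + a ^ 2 * b ^ 2 * Real.cos τ ^ 2) := by
      rw [integral_indicator_mul Ω hsub (divVec v₀), green hp hb v₀ hv₀cd]
      apply intervalIntegral.integral_congr
      intro τ _
      exact wit_bdry_val ha hb hp τ (hηK _ (bdry_mem_Kbd hb hp τ))
    exact le_iSup₂_of_le v₀ hmem (le_of_eq (congrArg ENNReal.ofReal hval.symm))
end Cutoff
end
end

section
/- Invariance of DTGV² under addition of affine functions: for every u ∈ L¹(Ω) and every affine function w(x) = c₀ + c₁x₁ + c₂x₂ on Ω, DTGV²_λ(u + w) = DTGV²_λ(u). -/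
open MeasureTheory Filter
open scoped ENNReal Topology Pointwise

noncomputable section

section AuxIBP

lemma pd_contDiff {g : E2 → ℝ} {n : ℕ} (hg : ContDiff ℝ (n + 1) g) (i : Fin 2) :
    ContDiff ℝ n (pd i g) := by
  have h1 : ContDiff ℝ n (fderiv ℝ g) := hg.fderiv_right (by norm_cast)
  exact (ContinuousLinearMap.apply ℝ ℝ (EuclideanSpace.single i 1)).contDiff.comp h1

lemma pd_continuous {g : E2 → ℝ} (hg : ContDiff ℝ 1 g) (i : Fin 2) :
    Continuous (pd i g) :=
  (hg.continuous_fderiv one_ne_zero).clm_apply continuous_const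

lemma pd_support {g : E2 → ℝ} (i : Fin 2) :
    Function.support (pd i g) ⊆ tsupport g := by
  intro x hx
  apply support_fderiv_subset (𝕜 := ℝ)
  intro h
  exact hx (by simp [pd, h])

lemma tsupport_pd {g : E2 → ℝ} (i : Fin 2) : tsupport (pd i g) ⊆ tsupport g :=
  closure_minimal (pd_support i) (isClosed_tsupport g)

lemma pd_hasCompactSupport {g : E2 → ℝ} (hg : HasCompactSupport g) (i : Fin 2) :
    HasCompactSupport (pd i g) :=
  hg.mono' (pd_support i)

/-- The derivative of the affine function. -/
def Laff (c₁ c₂ : ℝ) : E2 →L[ℝ] ℝ :=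
  c₁ • (EuclideanSpace.proj (0 : Fin 2) : E2 →L[ℝ] ℝ) +
    c₂ • (EuclideanSpace.proj (1 : Fin 2) : E2 →L[ℝ] ℝ)

lemma aff_hasFDerivAt (c₀ c₁ c₂ : ℝ) (x : E2) :
    HasFDerivAt (fun x : E2 => c₀ + c₁ * x 0 + c₂ * x 1) (Laff c₁ c₂) x := by
  have h : HasFDerivAt (fun x : E2 => c₀ + Laff c₁ c₂ x) (Laff c₁ c₂) x :=
    (Laff c₁ c₂).hasFDerivAt.const_add c₀
  convert h using 2 with y
  simp only [Laff, ContinuousLinearMap.add_apply, ContinuousLinearMap.coe_smul',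
    Pi.smul_apply, PiLp.proj_apply, smul_eq_mul]
  ring

lemma aff_continuous (c₀ c₁ c₂ : ℝ) :
    Continuous (fun x : E2 => c₀ + c₁ * x 0 + c₂ * x 1) :=
  Differentiable.continuous fun x => (aff_hasFDerivAt c₀ c₁ c₂ x).differentiableAt

lemma Laff_single (c₁ c₂ : ℝ) (i : Fin 2) :
    Laff c₁ c₂ (EuclideanSpace.single i 1) = ![c₁, c₂] i := by
  fin_cases i <;>
    simp [Laff, PiLp.proj_apply, EuclideanSpace.single_apply]

lemma key_ibp (c₀ c₁ c₂ : ℝ) {g : E2 → ℝ} (hg : ContDiff ℝ 1 g)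
    (hgs : HasCompactSupport g) (i : Fin 2) :
    ∫ x : E2, (c₀ + c₁ * x 0 + c₂ * x 1) * pd i g x =
      -(![c₁, c₂] i * ∫ x : E2, g x) := by
  set v := EuclideanSpace.single i (1 : ℝ) with hv
  set P := fun x : E2 => c₀ + c₁ * x 0 + c₂ * x 1 with hP
  have hPd : Differentiable ℝ P := fun x => (aff_hasFDerivAt c₀ c₁ c₂ x).differentiableAt
  have hfP : ∀ x : E2, fderiv ℝ P x = Laff c₁ c₂ := fun x => (aff_hasFDerivAt c₀ c₁ c₂ x).fderiv
  have hPc : Continuous P := hPd.continuous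
  have hgint : Integrable g := hg.continuous.integrable_of_hasCompactSupport hgs
  have h1 : Integrable (fun x : E2 => fderiv ℝ P x v * g x) := by
    simpa only [hfP, hv, Laff_single] using hgint.const_mul (![c₁, c₂] i)
  have h2 : Integrable (fun x : E2 => P x * fderiv ℝ g x v) := by
    have hc : Continuous (fun x : E2 => P x * pd i g x) := hPc.mul (pd_continuous hg i)
    have hs : HasCompactSupport (fun x : E2 => P x * pd i g x) :=
      HasCompactSupport.mul_left (pd_hasCompactSupport hgs i)
    exact hc.integrable_of_hasCompactSupport hs
  have h3 : Integrable (fun x : E2 => P x * g x) :=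
    (hPc.mul hg.continuous).integrable_of_hasCompactSupport hgs.mul_left
  have := integral_mul_fderiv_eq_neg_fderiv_mul_of_integrable h1 h2 h3 (fun x _ => hPd x)
    (fun x _ => hg.differentiable one_ne_zero x)
  show ∫ x : E2, P x * pd i g x = -(![c₁, c₂] i * ∫ x : E2, g x)
  calc ∫ x : E2, P x * pd i g x = ∫ x : E2, P x * fderiv ℝ g x v := rfl
    _ = -∫ x : E2, fderiv ℝ P x v * g x := this
    _ = -(![c₁, c₂] i * ∫ x : E2, g x) := by
        congr 1
        simp only [hfP, hv, Laff_single]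
        exact integral_const_mul _ _

lemma integral_pd_eq_zero {g : E2 → ℝ} (hg : ContDiff ℝ 1 g)
    (hgs : HasCompactSupport g) (i : Fin 2) : ∫ x : E2, pd i g x = 0 := by
  have := key_ibp 1 0 0 hg hgs i
  simp only [zero_mul, add_zero, one_mul] at this
  rw [this]
  fin_cases i <;> simp

lemma key_ibp2 (c₀ c₁ c₂ : ℝ) {f : E2 → ℝ} (hf : ContDiff ℝ 2 f)
    (hfs : HasCompactSupport f) (i j : Fin 2) :
    ∫ x : E2, (c₀ + c₁ * x 0 + c₂ * x 1) * pd i (pd j f) x = 0 := by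
  have h1 : ContDiff ℝ 1 (pd j f) := pd_contDiff (n := 1) hf j
  have h2 : HasCompactSupport (pd j f) := pd_hasCompactSupport hfs j
  rw [key_ibp c₀ c₁ c₂ h1 h2 i, integral_pd_eq_zero (hf.of_le one_le_two) hfs j]
  simp

lemma aff_mul_div2_integral_zero (Ω : Set E2) (c₀ c₁ c₂ : ℝ)
    {W : E2 → Mat2} (hW : Cc2Sym Ω W) :
    ∫ x in Ω, (c₀ + c₁ * x 0 + c₂ * x 1) * div2Mat W x = 0 := by
  obtain ⟨hsm, hcs, hts, -⟩ := hW
  have hcs' : ∀ k l : Fin 2, HasCompactSupport (fun x => W x k l) := fun k l =>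
    hcs.comp_left (g := fun M : Mat2 => M k l) rfl
  have hts' : ∀ k l : Fin 2, tsupport (fun x => W x k l) ⊆ Ω := fun k l => by
    refine subset_trans (closure_mono ?_) hts
    intro x hx h
    exact hx (by show W x k l = 0; rw [h]; simp)
  have hvanish : ∀ x, x ∉ Ω → div2Mat W x = 0 := by
    intro x hx
    have hz : ∀ i j k l : Fin 2, pd i (pd j (fun y => W y k l)) x = 0 := by
      intro i j k l
      by_contra h
      exact hx (hts' k l (tsupport_pd j (pd_support i h)))
    simp [div2Mat, hz]
  rw [setIntegral_eq_integral_of_forall_compl_eq_zero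
    (fun x hx => by rw [hvanish x hx, mul_zero])]
  have hPc : Continuous (fun x : E2 => c₀ + c₁ * x 0 + c₂ * x 1) := aff_continuous c₀ c₁ c₂
  have hint : ∀ i j k l : Fin 2,
      Integrable (fun x : E2 => (c₀ + c₁ * x 0 + c₂ * x 1) *
        pd i (pd j (fun y => W y k l)) x) := by
    intro i j k l
    have h1 : ContDiff ℝ 1 (pd j fun y => W y k l) := pd_contDiff (n := 1) (hsm k l) j
    refine Continuous.integrable_of_hasCompactSupport (hPc.mul (pd_continuous h1 i)) ?_
    exact HasCompactSupport.mul_left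
      (pd_hasCompactSupport (pd_hasCompactSupport (hcs' k l) j) i)
  calc ∫ x : E2, (c₀ + c₁ * x 0 + c₂ * x 1) * div2Mat W x
      = ∫ x : E2, ((c₀ + c₁ * x 0 + c₂ * x 1) * pd 0 (pd 0 (fun y => W y 0 0)) x
          + (c₀ + c₁ * x 0 + c₂ * x 1) * pd 1 (pd 1 (fun y => W y 1 1)) x
          + 2 * ((c₀ + c₁ * x 0 + c₂ * x 1) * pd 0 (pd 1 (fun y => W y 0 1)) x)) := by
        refine integral_congr_ae (Filter.Eventually.of_forall fun x => ?_)
        simp only [div2Mat]; ring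
    _ = 0 := by
        have hAB : Integrable (fun x : E2 => (c₀ + c₁ * x 0 + c₂ * x 1) *
            pd 0 (pd 0 (fun y => W y 0 0)) x +
            (c₀ + c₁ * x 0 + c₂ * x 1) * pd 1 (pd 1 (fun y => W y 1 1)) x) :=
          (hint 0 0 0 0).add (hint 1 1 1 1)
        rw [integral_add hAB ((hint 0 1 0 1).const_mul 2),
          integral_add (hint 0 0 0 0) (hint 1 1 1 1), integral_const_mul,
          key_ibp2 c₀ c₁ c₂ (hsm 0 0) (hcs' 0 0) 0 0,
          key_ibp2 c₀ c₁ c₂ (hsm 1 1) (hcs' 1 1) 1 1,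
          key_ibp2 c₀ c₁ c₂ (hsm 0 1) (hcs' 0 1) 0 1]
        ring

end AuxIBP

/-- `DTGV²_λ` is invariant under addition of affine functions. -/
theorem dtgv2_add_affine (Ω : Set E2) (hΩo : IsOpen Ω) (hΩb : Bornology.IsBounded Ω)
    (a θ l0 l1 : ℝ) (ha : 0 < a) (ha1 : a ≤ 1) (hl0 : 0 < l0) (hl1 : 0 < l1)
    (u : E2 → ℝ) (hu : IntegrableOn u Ω) (c₀ c₁ c₂ : ℝ) :
    DTGV2 Ω a θ l0 l1 (fun x => u x + (c₀ + c₁ * x 0 + c₂ * x 1)) =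
      DTGV2 Ω a θ l0 l1 u := by
  unfold DTGV2
  refine iSup_congr fun W => iSup_congr fun hW => ?_
  obtain ⟨hc2, hEl, hDv⟩ := hW
  congr 1
  obtain ⟨hsm, hcs, hts, hsym⟩ := hc2
  have hcs' : ∀ k l : Fin 2, HasCompactSupport (fun x => W x k l) := fun k l =>
    hcs.comp_left (g := fun M : Mat2 => M k l) rfl
  have hterm : ∀ i j k l : Fin 2, Continuous (fun x => pd i (pd j (fun y => W y k l)) x) :=
    fun i j k l => pd_continuous (pd_contDiff (n := 1) (hsm k l) j) i
  have htermcs : ∀ i j k l : Fin 2,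
      HasCompactSupport (fun x => pd i (pd j (fun y => W y k l)) x) :=
    fun i j k l => pd_hasCompactSupport (pd_hasCompactSupport (hcs' k l) j) i
  have hcont : Continuous (div2Mat W) := by
    show Continuous fun x => pd 0 (pd 0 (fun y => W y 0 0)) x
      + pd 1 (pd 1 (fun y => W y 1 1)) x + 2 * pd 0 (pd 1 (fun y => W y 0 1)) x
    exact ((hterm 0 0 0 0).add (hterm 1 1 1 1)).add (continuous_const.mul (hterm 0 1 0 1))
  have hcsd : HasCompactSupport (div2Mat W) := by
    have : HasCompactSupport fun x => pd 0 (pd 0 (fun y => W y 0 0)) x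
        + pd 1 (pd 1 (fun y => W y 1 1)) x + 2 * pd 0 (pd 1 (fun y => W y 0 1)) x :=
      ((htermcs 0 0 0 0).add (htermcs 1 1 1 1)).add ((htermcs 0 1 0 1).mul_left)
    exact this
  obtain ⟨C, hC⟩ := hcsd.exists_bound_of_continuous hcont
  have hud : IntegrableOn (fun x => u x * div2Mat W x) Ω := by
    have h := hu.bdd_mul hcont.aestronglyMeasurable.restrict (Filter.Eventually.of_forall fun x => hC x)
    exact h.congr (Filter.Eventually.of_forall fun x => mul_comm _ _)
  have hPd : IntegrableOn (fun x => (c₀ + c₁ * x 0 + c₂ * x 1) * div2Mat W x) Ω :=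
    (((aff_continuous c₀ c₁ c₂).mul hcont).integrable_of_hasCompactSupport
      hcsd.mul_left).integrableOn
  calc ∫ x in Ω, (u x + (c₀ + c₁ * x 0 + c₂ * x 1)) * div2Mat W x
      = ∫ x in Ω, (u x * div2Mat W x + (c₀ + c₁ * x 0 + c₂ * x 1) * div2Mat W x) := by
        refine integral_congr_ae (Filter.Eventually.of_forall fun x => ?_)
        ring
    _ = (∫ x in Ω, u x * div2Mat W x)
          + ∫ x in Ω, (c₀ + c₁ * x 0 + c₂ * x 1) * div2Mat W x := integral_add hud hPd
    _ = ∫ x in Ω, u x * div2Mat W x := by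
        rw [aff_mul_div2_integral_zero Ω c₀ c₁ c₂ ⟨hsm, hcs, hts, hsym⟩, add_zero]
end
end

section
/- Lower intermediate bound in Proposition 4.2 (second order): for every u ∈ L¹(Ω), TGV²_{a²λ}(u) ≤ DTGV²_λ(u), where a²λ = (a²λ₀, a²λ₁). -/
open MeasureTheory Filter
open scoped ENNReal Topology Pointwise

noncomputable section

lemma vec2_smul (c x y : ℝ) : vec2 (c * x) (c * y) = c • vec2 x y := by
  ext i; fin_cases i <;> simp [vec2]

lemma mem_Ellip_of_norm_le {a θ : ℝ} (ha : 0 < a) (ha1 : a ≤ 1) {v : E2}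
    (h : ‖v‖ ≤ a) : v ∈ Ellip a θ := by
  have ha2 : (0:ℝ) < a ^ 2 := by positivity
  have hns : ‖v‖ ^ 2 = (v 0) ^ 2 + (v 1) ^ 2 := by
    rw [EuclideanSpace.norm_eq, Real.sq_sqrt (by positivity)]
    simp [Fin.sum_univ_two, sq_abs]
  have hn : (v 0) ^ 2 + (v 1) ^ 2 ≤ a ^ 2 := by
    rw [← hns]; nlinarith [norm_nonneg v]
  set p := v 0 * Real.cos θ + v 1 * Real.sin θ with hp
  set q := -(v 0) * Real.sin θ + v 1 * Real.cos θ with hq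
  have hpq : p ^ 2 + q ^ 2 ≤ a ^ 2 := by
    rw [hp, hq]
    nlinarith [hn, Real.sin_sq_add_cos_sq θ]
  have ha21 : a ^ 2 ≤ 1 := by nlinarith
  have h1 : p ^ 2 ≤ p ^ 2 / a ^ 2 := by
    rw [le_div_iff₀ ha2]
    nlinarith [mul_nonneg (sq_nonneg p) (sub_nonneg.mpr ha21)]
  have h2 : (q / a) ^ 2 = q ^ 2 / a ^ 2 := div_pow q a 2
  show p ^ 2 + (q / a) ^ 2 ≤ 1
  have : p ^ 2 + (q / a) ^ 2 ≤ (p ^ 2 + q ^ 2) / a ^ 2 := by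
    rw [h2, add_div]; linarith
  calc p ^ 2 + (q / a) ^ 2 ≤ (p ^ 2 + q ^ 2) / a ^ 2 := this
    _ ≤ 1 := (div_le_one ha2).mpr hpq

lemma smul_mem_EllipM_of_mem_BallM {a θ : ℝ} (ha : 0 < a) (ha1 : a ≤ 1) {V : Mat2}
    (hV : V ∈ BallM) : a ^ 2 • V ∈ EllipM a θ := by
  obtain ⟨hs, hr, hc⟩ := hV
  have hnorm : ∀ w : E2, w ∈ Metric.closedBall (0 : E2) 1 → a ^ 2 • w ∈ Ellip a θ := by
    intro w hw
    rw [mem_closedBall_zero_iff] at hw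
    apply mem_Ellip_of_norm_le ha ha1
    rw [norm_smul, Real.norm_eq_abs, abs_of_nonneg (by positivity)]
    nlinarith [norm_nonneg w]
  refine ⟨?_, fun i => ?_, fun j => ?_⟩
  · rw [Matrix.IsSymm, Matrix.transpose_smul, hs]
  · have : vec2 ((a ^ 2 • V) i 0) ((a ^ 2 • V) i 1)
        = a ^ 2 • vec2 (V i 0) (V i 1) := by
      simp only [Matrix.smul_apply, smul_eq_mul]; exact vec2_smul _ _ _
    rw [this]; exact hnorm _ (hr i)
  · have : vec2 ((a ^ 2 • V) 0 j) ((a ^ 2 • V) 1 j)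
        = a ^ 2 • vec2 (V 0 j) (V 1 j) := by
      simp only [Matrix.smul_apply, smul_eq_mul]; exact vec2_smul _ _ _
    rw [this]; exact hnorm _ (hc j)

/-- `TGV²_{a²λ}(u) ≤ DTGV²_λ(u)`. -/
theorem tgv2_scaled_le_dtgv2 (Ω : Set E2) (hΩo : IsOpen Ω) (hΩb : Bornology.IsBounded Ω)
    (a θ l0 l1 : ℝ) (ha : 0 < a) (ha1 : a ≤ 1) (hl0 : 0 < l0) (hl1 : 0 < l1)
    (u : E2 → ℝ) (hu : IntegrableOn u Ω) :
    TGV2 Ω (a ^ 2 * l0) (a ^ 2 * l1) u ≤ DTGV2 Ω a θ l0 l1 u := by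
  rw [TGV2, DTGV2]
  refine iSup₂_le fun W hW => ?_
  obtain ⟨hc, h0, h1⟩ := hW
  refine le_iSup₂_of_le W ?_ le_rfl
  refine ⟨hc, fun x hx => ?_, fun x hx => ?_⟩
  · -- W x ∈ l0 • EllipM a θ
    have hc0 : (a ^ 2 * l0) ≠ 0 := by positivity
    have hmem := h0 x hx
    rw [Set.mem_smul_set_iff_inv_smul_mem₀ hc0] at hmem
    rw [Set.mem_smul_set_iff_inv_smul_mem₀ hl0.ne']
    have : l0⁻¹ • W x = a ^ 2 • ((a ^ 2 * l0)⁻¹ • W x) := by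
      rw [smul_smul]; congr 1; field_simp
    rw [this]
    exact smul_mem_EllipM_of_mem_BallM ha ha1 hmem
  · -- divMat W x ∈ l1 • Ellip a θ
    have hmem := h1 x hx
    rw [mem_closedBall_zero_iff] at hmem
    rw [Set.mem_smul_set_iff_inv_smul_mem₀ hl1.ne']
    apply mem_Ellip_of_norm_le ha ha1
    rw [norm_smul, Real.norm_eq_abs, abs_of_nonneg (by positivity)]
    calc l1⁻¹ * ‖divMat W x‖ ≤ l1⁻¹ * (a ^ 2 * l1) := by
          apply mul_le_mul_of_nonneg_left hmem (by positivity)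
      _ = a ^ 2 := by field_simp
      _ ≤ a := by nlinarith
end
end
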